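/- arXiv:2103.12552 — 7 statements merged into one kernel-verified Lean document; each statement's English description precedes it below -/
import Mathlib

section
/- Let V₁, V₂, W₁, W₂ be subsets of matrix spaces over a field F such that the spans satisfy dim⟨V₁⟩ = dim⟨V₂⟩ ≥ max(dim⟨W₁⟩, dim⟨W₂⟩), products AB are well-defined square matrices for (A,B) in (V₁×V₂) ∪ (W₁×W₂), and the trace pairing on ⟨V₁⟩×⟨V₂⟩ is nondegenerate in the first argument (i.e. if A ∈ ⟨V₁⟩ satisfies tr(AB)=0 for all B ∈ ⟨V₂⟩ then A=0). If maps φ: V₁→W₁ and ψ: V₂→W₂ satisfy tr(φ(A)ψ(B)) = tr(AB) for all A ∈ V₁, B ∈ V₂, then dim⟨V₁⟩ = dim⟨V₂⟩ = dim⟨W₁⟩ = dim⟨W₂⟩ and φ, ψ extend to bijective linear maps ⟨V₁⟩→⟨W₁⟩ and ⟨V₂⟩→⟨W₂⟩ satisfying the same trace identity on the spans. -/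
open Matrix

theorem stmt0 {F : Type*} [Field F] {a b c d : ℕ}
    (V₁ : Set (Matrix (Fin a) (Fin b) F)) (V₂ : Set (Matrix (Fin b) (Fin a) F))
    (W₁ : Set (Matrix (Fin c) (Fin d) F)) (W₂ : Set (Matrix (Fin d) (Fin c) F))
    (hdim1 : Module.finrank F (Submodule.span F V₁) = Module.finrank F (Submodule.span F V₂))
    (hdim2 : Module.finrank F (Submodule.span F W₁) ≤ Module.finrank F (Submodule.span F V₁))
    (hdim3 : Module.finrank F (Submodule.span F W₂) ≤ Module.finrank F (Submodule.span F V₁))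
    (hnd : ∀ A ∈ Submodule.span F V₁,
      (∀ B ∈ Submodule.span F V₂, Matrix.trace (A * B) = 0) → A = 0)
    (φ : Matrix (Fin a) (Fin b) F → Matrix (Fin c) (Fin d) F)
    (ψ : Matrix (Fin b) (Fin a) F → Matrix (Fin d) (Fin c) F)
    (hφ : Set.MapsTo φ V₁ W₁) (hψ : Set.MapsTo ψ V₂ W₂)
    (htr : ∀ A ∈ V₁, ∀ B ∈ V₂, Matrix.trace (φ A * ψ B) = Matrix.trace (A * B)) :
    Module.finrank F (Submodule.span F V₁) = Module.finrank F (Submodule.span F W₁) ∧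
    Module.finrank F (Submodule.span F V₂) = Module.finrank F (Submodule.span F W₂) ∧
    ∃ (Φ : Submodule.span F V₁ →ₗ[F] Matrix (Fin c) (Fin d) F)
      (Ψ : Submodule.span F V₂ →ₗ[F] Matrix (Fin d) (Fin c) F),
      Function.Injective Φ ∧ Function.Injective Ψ ∧
      Set.range Φ = (Submodule.span F W₁ : Set (Matrix (Fin c) (Fin d) F)) ∧
      Set.range Ψ = (Submodule.span F W₂ : Set (Matrix (Fin d) (Fin c) F)) ∧
      (∀ A (hA : A ∈ V₁), Φ ⟨A, Submodule.subset_span hA⟩ = φ A) ∧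
      (∀ B (hB : B ∈ V₂), Ψ ⟨B, Submodule.subset_span hB⟩ = ψ B) ∧
      ∀ (x : Submodule.span F V₁) (y : Submodule.span F V₂),
        Matrix.trace (Φ x * Ψ y) =
          Matrix.trace ((x : Matrix (Fin a) (Fin b) F) * (y : Matrix (Fin b) (Fin a) F)) := by
  classical
  -- bilinear trace forms
  set M₁ := Submodule.span F V₁
  set M₂ := Submodule.span F V₂
  -- trace-pairing bilinear form on the spans
  let T₁ : M₁ →ₗ[F] M₂ →ₗ[F] F :=
    LinearMap.mk₂ F (fun x y => Matrix.trace ((x : Matrix (Fin a) (Fin b) F) * (y : Matrix (Fin b) (Fin a) F)))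
      (by intros; simp [Matrix.add_mul])
      (by intros; simp [Matrix.smul_mul])
      (by intros; simp [Matrix.mul_add])
      (by intros; simp [Matrix.mul_smul])
  -- T₁ is injective
  have hT₁inj : Function.Injective T₁ := by
    rw [injective_iff_map_eq_zero]
    intro x hx
    have := hnd x.1 x.2 (fun B hB => by
      have := congrArg (fun f => f ⟨B, hB⟩) hx
      simpa [T₁] using this)
    exact Subtype.ext this
  -- hence bijective onto the dual, giving nondegeneracy in the second argument
  have hT₁surj : Function.Surjective T₁ := by
    refine (LinearMap.injective_iff_surjective_of_finrank_eq_finrank ?_).mp hT₁inj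
    rw [Subspace.dual_finrank_eq, hdim1]
  have h2nd : ∀ y : M₂, (∀ x : M₁, Matrix.trace ((x : Matrix (Fin a) (Fin b) F) * (y : Matrix (Fin b) (Fin a) F)) = 0) → y = 0 := by
    intro y hy
    refine (Module.forall_dual_apply_eq_zero_iff F y).mp ?_
    intro f
    obtain ⟨x, rfl⟩ := hT₁surj f
    simpa [T₁] using hy x
  -- bases of the spans contained in V₁, V₂
  obtain ⟨t₁, ht₁sub, ht₁span, ht₁li⟩ := exists_linearIndependent F V₁
  obtain ⟨t₂, ht₂sub, ht₂span, ht₂li⟩ := exists_linearIndependent F V₂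
  let b₁ : Module.Basis t₁ F M₁ :=
    (Module.Basis.span ht₁li).map (LinearEquiv.ofEq _ _ (by rw [Subtype.range_coe, ht₁span]))
  let b₂ : Module.Basis t₂ F M₂ :=
    (Module.Basis.span ht₂li).map (LinearEquiv.ofEq _ _ (by rw [Subtype.range_coe, ht₂span]))
  have hb₁ : ∀ i : t₁, (b₁ i : Matrix (Fin a) (Fin b) F) = (i : Matrix (Fin a) (Fin b) F) := by
    intro i
    simp [b₁, Module.Basis.span_apply ht₁li i]
  have hb₂ : ∀ j : t₂, (b₂ j : Matrix (Fin b) (Fin a) F) = (j : Matrix (Fin b) (Fin a) F) := by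
    intro j
    simp [b₂, Module.Basis.span_apply ht₂li j]
  -- define the linear extensions
  let Φ : M₁ →ₗ[F] Matrix (Fin c) (Fin d) F := b₁.constr F (fun i => φ i.1)
  let Ψ : M₂ →ₗ[F] Matrix (Fin d) (Fin c) F := b₂.constr F (fun j => ψ j.1)
  have hΦb : ∀ i : t₁, Φ (b₁ i) = φ i.1 := fun i => b₁.constr_basis F _ i
  have hΨb : ∀ j : t₂, Ψ (b₂ j) = ψ j.1 := fun j => b₂.constr_basis F _ j
  -- the composed trace form
  let trW : Matrix (Fin c) (Fin d) F →ₗ[F] Matrix (Fin d) (Fin c) F →ₗ[F] F :=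
    LinearMap.mk₂ F (fun X Y => Matrix.trace (X * Y))
      (by intros; simp [Matrix.add_mul])
      (by intros; simp [Matrix.smul_mul])
      (by intros; simp [Matrix.mul_add])
      (by intros; simp [Matrix.mul_smul])
  let T₂ : M₁ →ₗ[F] M₂ →ₗ[F] F := (trW.compl₂ Ψ).comp Φ
  have hT : T₂ = T₁ := by
    apply b₁.ext
    intro i
    apply b₂.ext
    intro j
    have := htr i.1 (ht₁sub i.2) j.1 (ht₂sub j.2)
    simp [T₂, T₁, trW, hΦb, hΨb, hb₁, hb₂, this]
  have htrace : ∀ (x : M₁) (y : M₂),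
      Matrix.trace (Φ x * Ψ y) = Matrix.trace ((x : Matrix (Fin a) (Fin b) F) * (y : Matrix (Fin b) (Fin a) F)) := by
    intro x y
    have := congrArg (fun f => f x y) hT
    simpa [T₂, T₁, trW] using this
  -- injectivity of Φ and Ψ
  have hΦinj : Function.Injective Φ := by
    rw [injective_iff_map_eq_zero]
    intro x hx
    refine Subtype.ext (hnd x.1 x.2 (fun B hB => ?_))
    have := htrace x ⟨B, hB⟩
    rw [hx] at this
    simpa using this.symm
  have hΨinj : Function.Injective Ψ := by
    rw [injective_iff_map_eq_zero]
    intro y hy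
    refine h2nd y (fun x => ?_)
    have := htrace x y
    rw [hy] at this
    simpa using this.symm
  -- ranges
  have hΦrange : LinearMap.range Φ = Submodule.span F W₁ := by
    have hle : LinearMap.range Φ ≤ Submodule.span F W₁ := by
      rw [Module.Basis.constr_range]
      refine Submodule.span_le.mpr ?_
      rintro _ ⟨i, rfl⟩
      exact Submodule.subset_span (hφ (ht₁sub i.2))
    refine Submodule.eq_of_le_of_finrank_le hle ?_
    rw [LinearMap.finrank_range_of_inj hΦinj]
    exact hdim2
  have hΨrange : LinearMap.range Ψ = Submodule.span F W₂ := by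
    have hle : LinearMap.range Ψ ≤ Submodule.span F W₂ := by
      rw [Module.Basis.constr_range]
      refine Submodule.span_le.mpr ?_
      rintro _ ⟨j, rfl⟩
      exact Submodule.subset_span (hψ (ht₂sub j.2))
    refine Submodule.eq_of_le_of_finrank_le hle ?_
    rw [LinearMap.finrank_range_of_inj hΨinj, ← hdim1]
    exact hdim3
  -- finrank equalities
  have hfr1 : Module.finrank F M₁ = Module.finrank F (Submodule.span F W₁) := by
    rw [← hΦrange, LinearMap.finrank_range_of_inj hΦinj]
  have hfr2 : Module.finrank F M₂ = Module.finrank F (Submodule.span F W₂) := by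
    rw [← hΨrange, LinearMap.finrank_range_of_inj hΨinj]
  -- Φ agrees with φ on V₁
  have hΦag : ∀ A (hA : A ∈ V₁), Φ ⟨A, Submodule.subset_span hA⟩ = φ A := by
    intro A hA
    have hmem : φ A ∈ LinearMap.range Φ := by
      rw [hΦrange]; exact Submodule.subset_span (hφ hA)
    obtain ⟨x, hx⟩ := hmem
    have hz : T₁ (x - ⟨A, Submodule.subset_span hA⟩) = 0 := by
      apply b₂.ext
      intro j
      have h1 : Matrix.trace ((x : Matrix (Fin a) (Fin b) F) * ((b₂ j : M₂) : Matrix (Fin b) (Fin a) F))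
          = Matrix.trace (A * (j : Matrix (Fin b) (Fin a) F)) := by
        rw [← htrace x (b₂ j), hx, hΨb, htr A hA j.1 (ht₂sub j.2)]
      rw [hb₂ j] at h1
      simp [T₁, hb₂ j, h1]
    have hz0 : ((x - ⟨A, Submodule.subset_span hA⟩ : M₁) : Matrix (Fin a) (Fin b) F) = 0 := by
      refine hnd _ (x - ⟨A, Submodule.subset_span hA⟩).2 (fun B hB => ?_)
      have := congrArg (fun f => f ⟨B, hB⟩) hz
      simpa [T₁, Matrix.sub_mul, sub_eq_zero] using this
    have hxA : x = ⟨A, Submodule.subset_span hA⟩ := by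
      have := sub_eq_zero.mp (Subtype.ext hz0 : (x - ⟨A, Submodule.subset_span hA⟩ : M₁) = 0)
      exact this
    rw [← hxA, hx]
  -- Ψ agrees with ψ on V₂
  have hΨag : ∀ B (hB : B ∈ V₂), Ψ ⟨B, Submodule.subset_span hB⟩ = ψ B := by
    intro B hB
    have hmem : ψ B ∈ LinearMap.range Ψ := by
      rw [hΨrange]; exact Submodule.subset_span (hψ hB)
    obtain ⟨y, hy⟩ := hmem
    have hz : T₁.flip (y - ⟨B, Submodule.subset_span hB⟩) = 0 := by
      apply b₁.ext
      intro i
      have h1 : Matrix.trace (((b₁ i : M₁) : Matrix (Fin a) (Fin b) F) * (y : Matrix (Fin b) (Fin a) F))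
          = Matrix.trace ((i : Matrix (Fin a) (Fin b) F) * B) := by
        rw [← htrace (b₁ i) y, hΦb, hy, htr i.1 (ht₁sub i.2) B hB]
      rw [hb₁ i] at h1
      simp [T₁, hb₁ i, h1]
    have hyB : y = ⟨B, Submodule.subset_span hB⟩ := by
      refine sub_eq_zero.mp (h2nd (y - ⟨B, Submodule.subset_span hB⟩) (fun x => ?_))
      have := congrArg (fun f => f x) hz
      simpa [T₁, Matrix.mul_sub, sub_eq_zero] using this
    rw [← hyB, hy]
  refine ⟨hfr1, hdim1 ▸ hfr2, Φ, Ψ, hΦinj, hΨinj, ?_, ?_, hΦag, hΨag, htrace⟩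
  · rw [← hΦrange]; rfl
  · rw [← hΨrange]; rfl
end

section
/- Let V₁, V₂, W₁, W₂ be subsets of matrix spaces over a field F with dim⟨V₁⟩ = dim⟨V₂⟩, where products AB are well-defined square matrices for (A,B) in (V₁×V₂) ∪ (W₁×W₂), and if A ∈ ⟨V₁⟩ satisfies tr(AB)=0 for all B ∈ ⟨V₂⟩ then A=0. If linear maps φ: V₁→W₁ and ψ: V₂→W₂ satisfy tr(φ(A)ψ(B)) = tr(AB) for all A ∈ V₁, B ∈ V₂, then dim⟨V₁⟩ = dim⟨V₂⟩ ≤ min(dim⟨W₁⟩, dim⟨W₂⟩), and φ, ψ extend to injective linear maps ⟨V₁⟩→⟨W₁⟩ and ⟨V₂⟩→⟨W₂⟩ preserving trace of products. -/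
open Matrix

section Aux

variable {F : Type*} [Field F]

/-- Bilinear trace-of-product form. -/
def trBil (F : Type*) [Field F] (m n : ℕ) :
    Matrix (Fin m) (Fin n) F →ₗ[F] Matrix (Fin n) (Fin m) F →ₗ[F] F :=
  LinearMap.mk₂ F (fun X Y => Matrix.trace (X * Y))
    (fun X X' Y => by simp [Matrix.add_mul])
    (fun cc X Y => by simp [smul_mul_assoc])
    (fun X Y Y' => by simp [Matrix.mul_add])
    (fun cc X Y => by simp [Matrix.mul_smul])

@[simp] lemma trBil_apply {m n : ℕ} (X : Matrix (Fin m) (Fin n) F)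
    (Y : Matrix (Fin n) (Fin m) F) : trBil F m n X Y = Matrix.trace (X * Y) := rfl

/-- A set-theoretic map that is "linear" on a set `V` extends to a linear map on the span. -/
lemma exists_extension {M N : Type*} [AddCommGroup M] [Module F M]
    [AddCommGroup N] [Module F N] [FiniteDimensional F M]
    (V : Set M) (φ : M → N)
    (hlin : ∀ (k : ℕ) (cs : Fin k → F) (v : Fin k → M),
      (∀ i, v i ∈ V) → (∑ i, cs i • v i) ∈ V →
        φ (∑ i, cs i • v i) = ∑ i, cs i • φ (v i)) :
    ∃ Φ : Submodule.span F V →ₗ[F] N,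
      ∀ A (hA : A ∈ V), Φ ⟨A, Submodule.subset_span hA⟩ = φ A := by
  obtain ⟨b, hbV, hbspan, hli⟩ := exists_linearIndependent F V
  let B : Module.Basis b F (Submodule.span F V) :=
    (Module.Basis.span hli).map (LinearEquiv.ofEq _ _ (by rw [Subtype.range_coe, hbspan]))
  haveI : Fintype b := FiniteDimensional.fintypeBasisIndex B
  have hBval : ∀ i : b, ((B i : Submodule.span F V) : M) = (i : M) := by
    intro i
    simp [B, Module.Basis.span_apply]
  refine ⟨B.constr F (fun i => φ i.val), ?_⟩
  intro A hA
  set x : Submodule.span F V := ⟨A, Submodule.subset_span hA⟩ with hx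
  have hxval : A = ∑ i, B.repr x i • (i : M) := by
    have h1 : (x : M) = ((∑ i, B.repr x i • B i : Submodule.span F V) : M) := by
      rw [B.sum_repr]
    simpa only [Submodule.coe_sum, Submodule.coe_smul, hBval] using h1
  set k := Fintype.card b with hk
  set e : Fin k ≃ b := (Fintype.equivFin b).symm with he
  have hsum : (∑ j : Fin k, (B.repr x (e j)) • ((e j : M))) = A := by
    rw [Equiv.sum_comp e (fun i => B.repr x i • (i : M))]
    exact hxval.symm
  have hφA : φ A = ∑ j : Fin k, B.repr x (e j) • φ (e j : M) := by
    rw [← hsum]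
    exact hlin k _ _ (fun j => hbV (e j).2) (hsum ▸ hA)
  have hc : (B.constr F fun i => φ i.val) x = ∑ i, B.repr x i • φ i.val := by
    simp [Module.Basis.constr_apply_fintype, Module.Basis.equivFun_apply]
  rw [hc, hφA, ← Equiv.sum_comp e (fun i => B.repr x i • φ i.val)]

end Aux

set_option maxHeartbeats 1000000 in
theorem stmt1 {F : Type*} [Field F] {a b c d : ℕ}
    (V₁ : Set (Matrix (Fin a) (Fin b) F)) (V₂ : Set (Matrix (Fin b) (Fin a) F))
    (W₁ : Set (Matrix (Fin c) (Fin d) F)) (W₂ : Set (Matrix (Fin d) (Fin c) F))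
    (hdim1 : Module.finrank F (Submodule.span F V₁) = Module.finrank F (Submodule.span F V₂))
    (hnd : ∀ A ∈ Submodule.span F V₁,
      (∀ B ∈ Submodule.span F V₂, Matrix.trace (A * B) = 0) → A = 0)
    (φ : Matrix (Fin a) (Fin b) F → Matrix (Fin c) (Fin d) F)
    (ψ : Matrix (Fin b) (Fin a) F → Matrix (Fin d) (Fin c) F)
    (hφ : Set.MapsTo φ V₁ W₁) (hψ : Set.MapsTo ψ V₂ W₂)
    (hφlin : ∀ (k : ℕ) (cs : Fin k → F) (v : Fin k → Matrix (Fin a) (Fin b) F),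
      (∀ i, v i ∈ V₁) → (∑ i, cs i • v i) ∈ V₁ →
        φ (∑ i, cs i • v i) = ∑ i, cs i • φ (v i))
    (hψlin : ∀ (k : ℕ) (cs : Fin k → F) (v : Fin k → Matrix (Fin b) (Fin a) F),
      (∀ i, v i ∈ V₂) → (∑ i, cs i • v i) ∈ V₂ →
        ψ (∑ i, cs i • v i) = ∑ i, cs i • ψ (v i))
    (htr : ∀ A ∈ V₁, ∀ B ∈ V₂, Matrix.trace (φ A * ψ B) = Matrix.trace (A * B)) :
    Module.finrank F (Submodule.span F V₁) ≤ Module.finrank F (Submodule.span F W₁) ∧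
    Module.finrank F (Submodule.span F V₂) ≤ Module.finrank F (Submodule.span F W₂) ∧
    ∃ (Φ : Submodule.span F V₁ →ₗ[F] Matrix (Fin c) (Fin d) F)
      (Ψ : Submodule.span F V₂ →ₗ[F] Matrix (Fin d) (Fin c) F),
      Function.Injective Φ ∧ Function.Injective Ψ ∧
      (∀ x : Submodule.span F V₁, Φ x ∈ Submodule.span F W₁) ∧
      (∀ y : Submodule.span F V₂, Ψ y ∈ Submodule.span F W₂) ∧
      (∀ A (hA : A ∈ V₁), Φ ⟨A, Submodule.subset_span hA⟩ = φ A) ∧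
      (∀ B (hB : B ∈ V₂), Ψ ⟨B, Submodule.subset_span hB⟩ = ψ B) ∧
      ∀ (x : Submodule.span F V₁) (y : Submodule.span F V₂),
        Matrix.trace (Φ x * Ψ y) =
          Matrix.trace ((x : Matrix (Fin a) (Fin b) F) * (y : Matrix (Fin b) (Fin a) F)) := by
  classical
  obtain ⟨Φ, hΦ⟩ := exists_extension (F := F) V₁ φ hφlin
  obtain ⟨Ψ, hΨ⟩ := exists_extension (F := F) V₂ ψ hψlin
  -- the main trace identity
  have key : ∀ (x : Submodule.span F V₁) (y : Submodule.span F V₂),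
      Matrix.trace (Φ x * Ψ y) = Matrix.trace ((x : Matrix (Fin a) (Fin b) F) * (y : Matrix (Fin b) (Fin a) F)) := by
    -- first: for A ∈ V₁ fixed, over all y
    have step1 : ∀ A (hA : A ∈ V₁) (y : Submodule.span F V₂),
        Matrix.trace (φ A * Ψ y) = Matrix.trace (A * (y : Matrix (Fin b) (Fin a) F)) := by
      intro A hA
      have heq : (trBil F c d (φ A)).comp Ψ
          = (trBil F a b A).comp (Submodule.span F V₂).subtype := by
        apply LinearMap.ext_on (Submodule.span_span_coe_preimage (s := V₂) (R := F))
        rintro ⟨B, hBs⟩ hB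
        have : (⟨B, hBs⟩ : Submodule.span F V₂) = ⟨B, Submodule.subset_span hB⟩ := rfl
        simp only [LinearMap.comp_apply, this, hΨ B hB, trBil_apply,
          Submodule.subtype_apply]
        exact htr A hA B hB
      intro y
      have := LinearMap.congr_fun heq y
      simpa using this
    intro x y
    have heq : ((trBil F c d).flip (Ψ y)).comp Φ
        = ((trBil F a b).flip (y : Matrix (Fin b) (Fin a) F)).comp
            (Submodule.span F V₁).subtype := by
      apply LinearMap.ext_on (Submodule.span_span_coe_preimage (s := V₁) (R := F))
      rintro ⟨A, hAs⟩ hA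
      have : (⟨A, hAs⟩ : Submodule.span F V₁) = ⟨A, Submodule.subset_span hA⟩ := rfl
      simp only [LinearMap.comp_apply, this, hΦ A hA, LinearMap.flip_apply, trBil_apply,
        Submodule.subtype_apply]
      exact step1 A hA y
    have := LinearMap.congr_fun heq x
    simpa using this
  -- images land in spans
  have hΦW : ∀ x : Submodule.span F V₁, Φ x ∈ Submodule.span F W₁ := by
    have : Submodule.span F (((↑) : Submodule.span F V₁ → _) ⁻¹' V₁)
        ≤ Submodule.comap Φ (Submodule.span F W₁) := by
      apply Submodule.span_le.mpr
      rintro ⟨A, hAs⟩ hA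
      show Φ ⟨A, hAs⟩ ∈ Submodule.span F W₁
      have h1 : Φ ⟨A, hAs⟩ = φ A := hΦ A hA
      rw [h1]
      exact Submodule.subset_span (hφ hA)
    rw [Submodule.span_span_coe_preimage] at this
    intro x
    exact this Submodule.mem_top
  have hΨW : ∀ y : Submodule.span F V₂, Ψ y ∈ Submodule.span F W₂ := by
    have : Submodule.span F (((↑) : Submodule.span F V₂ → _) ⁻¹' V₂)
        ≤ Submodule.comap Ψ (Submodule.span F W₂) := by
      apply Submodule.span_le.mpr
      rintro ⟨B, hBs⟩ hB
      show Ψ ⟨B, hBs⟩ ∈ Submodule.span F W₂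
      have h1 : Ψ ⟨B, hBs⟩ = ψ B := hΨ B hB
      rw [h1]
      exact Submodule.subset_span (hψ hB)
    rw [Submodule.span_span_coe_preimage] at this
    intro y
    exact this Submodule.mem_top
  -- injectivity of Φ
  have hΦinj : Function.Injective Φ := by
    rw [← LinearMap.ker_eq_bot, LinearMap.ker_eq_bot']
    intro x hx
    have hz : ∀ B ∈ Submodule.span F V₂, Matrix.trace ((x : Matrix (Fin a) (Fin b) F) * B) = 0 := by
      intro B hB
      have := key x ⟨B, hB⟩
      rw [hx] at this
      simpa using this.symm
    exact Subtype.ext (hnd _ x.2 hz)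
  -- nondegeneracy in the second slot via dimensions
  let θ : Submodule.span F V₁ →ₗ[F] Module.Dual F (Submodule.span F V₂) :=
    { toFun := fun x => (trBil F a b (x : Matrix (Fin a) (Fin b) F)).comp
        (Submodule.span F V₂).subtype
      map_add' := by intro x y; ext z; simp [map_add]
      map_smul' := by intro cc x; ext z; simp }
  have hθinj : Function.Injective θ := by
    rw [← LinearMap.ker_eq_bot, LinearMap.ker_eq_bot']
    intro x hx
    refine Subtype.ext (hnd _ x.2 ?_)
    intro B hB
    have := LinearMap.congr_fun hx (⟨B, hB⟩ : Submodule.span F V₂)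
    simpa [θ] using this
  have hθsurj : Function.Surjective θ := by
    have hdd : Module.finrank F (Submodule.span F V₁)
        = Module.finrank F (Module.Dual F (Submodule.span F V₂)) := by
      rw [Subspace.dual_finrank_eq]; exact hdim1
    exact (LinearMap.injective_iff_surjective_of_finrank_eq_finrank hdd).mp hθinj
  have hΨinj : Function.Injective Ψ := by
    rw [← LinearMap.ker_eq_bot, LinearMap.ker_eq_bot']
    intro y hy
    have hzero : ∀ f : Module.Dual F (Submodule.span F V₂), f y = 0 := by
      intro f
      obtain ⟨x, rfl⟩ := hθsurj f
      have := key x y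
      rw [hy] at this
      simpa [θ] using this.symm
    exact (Module.forall_dual_apply_eq_zero_iff F y).mp hzero
  -- dimension bounds
  have hle1 : Module.finrank F (Submodule.span F V₁)
      ≤ Module.finrank F (Submodule.span F W₁) := by
    have : Function.Injective (Φ.codRestrict (Submodule.span F W₁) hΦW) := by
      intro x y h
      exact hΦinj (congrArg Subtype.val h)
    exact LinearMap.finrank_le_finrank_of_injective this
  have hle2 : Module.finrank F (Submodule.span F V₂)
      ≤ Module.finrank F (Submodule.span F W₂) := by
    have : Function.Injective (Ψ.codRestrict (Submodule.span F W₂) hΨW) := by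
      intro x y h
      exact hΨinj (congrArg Subtype.val h)
    exact LinearMap.finrank_le_finrank_of_injective this
  exact ⟨hle1, hle2, Φ, Ψ, hΦinj, hΨinj, hΦW, hΨW, hΦ, hΨ, key⟩
end

section
/- Let m ≥ 3 and n ≥ 1. Maps φ₁,…,φ_m: M_n → M_n satisfy tr(φ₁(A₁)⋯φ_m(A_m)) = tr(A₁⋯A_m) for all A₁,…,A_m ∈ M_n if and only if there exist invertible matrices N₁,…,N_m ∈ M_n (with N_{m+1} := N₁) such that φᵢ(A) = Nᵢ A N_{i+1}^{-1} for all A ∈ M_n and all i = 1,…,m. -/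
open Matrix
open Fin.NatCast

namespace Stmt3Aux

abbrev Mx (n : ℕ) := Matrix (Fin n) (Fin n) ℂ

/-! ### Trace nondegeneracy -/

lemma trace_nondegen {n : ℕ} (A : Mx n)
    (h : ∀ B : Mx n, (A * B).trace = 0) : A = 0 := by
  ext i j
  have := h (Matrix.single j i 1)
  simp only [Matrix.trace, Matrix.diag, Matrix.mul_apply, Matrix.single,
    Matrix.of_apply, mul_ite, mul_one, mul_zero] at this
  rw [Finset.sum_comm] at this
  simpa [ite_and, Finset.sum_ite_eq] using this

lemma trace_cancel {n : ℕ} (A B : Mx n)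
    (h : ∀ C : Mx n, (A * C).trace = (B * C).trace) : A = B := by
  have h0 : A - B = 0 := trace_nondegen _ (fun C => by
    rw [Matrix.sub_mul, Matrix.trace_sub, h C, sub_self])
  exact sub_eq_zero.mp h0

/-! ### Unit helpers -/

lemma isUnit_of_right_inv {n : ℕ} {X Y : Mx n} (h : X * Y = 1) : IsUnit Y :=
  ⟨⟨Y, X, mul_eq_one_comm.mp h, h⟩, rfl⟩

lemma unit_mul_inv {n : ℕ} {U : Mx n} (hU : IsUnit U) : U * U⁻¹ = 1 :=
  Matrix.mul_nonsing_inv U ((Matrix.isUnit_iff_isUnit_det U).mp hU)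

lemma unit_inv_mul {n : ℕ} {U : Mx n} (hU : IsUnit U) : U⁻¹ * U = 1 :=
  Matrix.nonsing_inv_mul U ((Matrix.isUnit_iff_isUnit_det U).mp hU)

lemma unit_inv_unit {n : ℕ} {U : Mx n} (hU : IsUnit U) : IsUnit U⁻¹ :=
  isUnit_of_right_inv (unit_mul_inv hU)

lemma unit_right_cancel {n : ℕ} {U X Y : Mx n} (hU : IsUnit U) (h : X * U = Y * U) : X = Y := by
  have h2 := congrArg (· * U⁻¹) h
  rwa [mul_assoc, mul_assoc, unit_mul_inv hU, mul_one, mul_one] at h2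

/-! ### Abstract span lemma via duality -/

noncomputable def trB {n : ℕ} (Y : Mx n) : Mx n →ₗ[ℂ] ℂ where
  toFun X := (Y * X).trace
  map_add' X X' := by simp [Matrix.mul_add]
  map_smul' c X := by simp [Matrix.mul_smul]

lemma span_helper {n : ℕ} (R : Set (Mx n × Mx n)) (Z1 Z2 : Mx n)
    (h : ∀ p ∈ R, (Z1 * p.1).trace = (Z2 * p.1).trace) :
    ∀ X ∈ Submodule.span ℂ (Prod.fst '' R), (Z1 * X).trace = (Z2 * X).trace := by
  intro X hX
  induction hX using Submodule.span_induction with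
  | mem x hx => obtain ⟨p, hp, rfl⟩ := hx; exact h p hp
  | zero => simp
  | add x y _ _ hx hy => simp [Matrix.mul_add, Matrix.trace_add, hx, hy]
  | smul c x _ hx => simp [Matrix.mul_smul, Matrix.trace_smul, hx]

lemma abs_span {n : ℕ} (F : Mx n → Mx n) (R : Set (Mx n × Mx n))
    (h1 : ∀ p ∈ R, ∀ A, (F A * p.1).trace = (A * p.2).trace)
    (h2 : ∀ B, ∃ p ∈ R, p.2 = B) :
    Submodule.span ℂ (Prod.fst '' R) = ⊤ := by
  set W := Submodule.span ℂ (Prod.fst '' R) with hW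
  let lam : Mx n →ₗ[ℂ] Module.Dual ℂ W :=
    { toFun := fun A => (trB (F A)).comp W.subtype
      map_add' := fun A A' => by
        ext ⟨x, hx⟩
        have := span_helper R (F (A + A')) (F A + F A') (fun p hp => by
          rw [h1 p hp (A + A'), Matrix.add_mul, Matrix.trace_add, ← h1 p hp A, ← h1 p hp A',
            ← Matrix.trace_add, ← Matrix.add_mul]) x hx
        simpa [trB, Matrix.add_mul, Matrix.trace_add] using this
      map_smul' := fun c A => by
        ext ⟨x, hx⟩
        have := span_helper R (F (c • A)) (c • F A) (fun p hp => by
          rw [h1 p hp (c • A), Matrix.smul_mul, Matrix.trace_smul, ← h1 p hp A,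
            ← Matrix.trace_smul, ← Matrix.smul_mul]) x hx
        simpa [trB, Matrix.smul_mul, Matrix.trace_smul] using this }
  have hinj : Function.Injective lam := by
    intro A A' hAA
    apply trace_cancel
    intro C
    obtain ⟨p, hp, rfl⟩ := h2 C
    rw [← h1 p hp A, ← h1 p hp A']
    have hx : p.1 ∈ W := Submodule.subset_span ⟨p, hp, rfl⟩
    have := congrArg (fun f => f ⟨p.1, hx⟩) hAA
    simpa [lam, trB] using this
  have hle : Module.finrank ℂ (Mx n) ≤ Module.finrank ℂ (Module.Dual ℂ W) :=
    LinearMap.finrank_le_finrank_of_injective hinj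
  rw [Subspace.dual_finrank_eq] at hle
  exact Submodule.eq_top_of_finrank_eq (le_antisymm (Submodule.finrank_le W) hle)

lemma abs_cancel {n : ℕ} (R : Set (Mx n × Mx n))
    (hspan : Submodule.span ℂ (Prod.fst '' R) = ⊤)
    (G1 G2 : Mx n)
    (h : ∀ p ∈ R, (G1 * p.1).trace = (G2 * p.1).trace) : G1 = G2 := by
  apply trace_cancel
  intro C
  exact span_helper R G1 G2 h C (hspan ▸ Submodule.mem_top)

/-! ### List lemmas -/

section listlem
variable {M : Type*} [Monoid M]

lemma cons_ofFn_prod {s : ℕ} (g : Fin (s+1) → M → M) (A : M) (T : Fin s → M) :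
    (List.ofFn fun i => g i ((Fin.cons A T : Fin (s+1) → M) i)).prod
      = g 0 A * (List.ofFn fun j : Fin s => g j.succ (T j)).prod := by
  rw [List.ofFn_succ, List.prod_cons]
  simp [Fin.cons_succ]

lemma cons_prod {s : ℕ} (A : M) (T : Fin s → M) :
    (List.ofFn (Fin.cons A T)).prod = A * (List.ofFn T).prod := by
  rw [List.ofFn_succ, List.prod_cons]
  simp [Fin.cons_succ]

lemma cons2_ofFn_prod {s : ℕ} (g : Fin (s+2) → M → M) (A B : M) (T : Fin s → M) :
    (List.ofFn fun i => g i ((Fin.cons A (Fin.cons B T) : Fin (s+2) → M) i)).prod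
      = g 0 A * (g 1 B * (List.ofFn fun j : Fin s => g j.succ.succ (T j)).prod) := by
  rw [List.ofFn_succ, List.prod_cons]
  simp only [Fin.cons_zero, Fin.cons_succ]
  rw [List.ofFn_succ, List.prod_cons]
  simp [Fin.cons_succ, Fin.succ_zero_eq_one]

lemma cons2_prod {s : ℕ} (A B : M) (T : Fin s → M) :
    (List.ofFn (Fin.cons A (Fin.cons B T))).prod = A * (B * (List.ofFn T).prod) := by
  rw [List.ofFn_succ, List.prod_cons]
  simp only [Fin.cons_zero, Fin.cons_succ]
  rw [List.ofFn_succ, List.prod_cons]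
  simp [Fin.cons_succ]

lemma ofFn_one_prod {s : ℕ} : (List.ofFn (fun _ : Fin s => (1 : M))).prod = 1 := by
  simp

lemma ofFn_nat_map (r : ℕ) (f : ℕ → M) :
    List.ofFn (fun j : Fin r => f j.val) = (List.range r).map f := by
  induction r with
  | zero => simp
  | succ r ih =>
    rw [List.ofFn_succ', List.range_succ, List.map_append]
    simp only [Fin.coe_castSucc, Fin.val_last, List.concat_eq_append, ih]
    simp

end listlem

lemma trace_rot_one {n s : ℕ} (g : Fin (s+1) → Mx n) :
    ((List.ofFn fun t => g (t + 1)).prod).trace = ((List.ofFn g).prod).trace := by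
  rw [List.ofFn_succ' (fun t => g (t + 1)), List.concat_eq_append, List.prod_append]
  simp only [Fin.coeSucc_eq_succ, Fin.last_add_one, List.prod_cons, List.prod_nil, mul_one]
  rw [List.ofFn_succ (f := g), List.prod_cons, Matrix.trace_mul_comm]

lemma trace_rot {n m : ℕ} [NeZero m] (g : Fin m → Mx n) (i : Fin m) :
    ((List.ofFn fun j => g (j + i)).prod).trace = ((List.ofFn g).prod).trace := by
  have key : ∀ r : ℕ, ∀ g : Fin m → Mx n,
      ((List.ofFn fun j => g (j + (r : Fin m))).prod).trace = ((List.ofFn g).prod).trace := by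
    intro r
    induction r with
    | zero => intro g; simp
    | succ r ih =>
      intro g
      have e : (fun j : Fin m => g (j + ((r + 1 : ℕ) : Fin m)))
          = fun j : Fin m => (fun t => g (t + 1)) (j + (r : Fin m)) := by
        funext j; push_cast; rw [add_assoc]
      rw [e, ih (fun t => g (t + 1))]
      obtain ⟨s, rfl⟩ : ∃ s, m = s + 1 :=
        ⟨m - 1, (Nat.succ_pred_eq_of_pos (Nat.pos_of_ne_zero (NeZero.ne m))).symm⟩
      exact trace_rot_one g
  have := key i.val g
  rwa [Fin.cast_val_eq_self] at this

/-! ### Telescoping (easy direction) -/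

lemma tele_nat {n : ℕ} (D : ℕ → Mx n) (hD : ∀ r, IsUnit (D r)) :
    ∀ (s : ℕ) (C : Fin s → Mx n),
      (List.ofFn fun j => D j.val * C j * (D (j.val + 1))⁻¹).prod
        = D 0 * (List.ofFn C).prod * (D s)⁻¹ := by
  intro s
  induction s with
  | zero =>
    intro C
    simp only [List.ofFn_zero, List.prod_nil, mul_one]
    rw [unit_mul_inv (hD 0)]
  | succ s ih =>
    intro C
    rw [List.ofFn_succ' (f := fun j : Fin (s+1) => D j.val * C j * (D (j.val + 1))⁻¹),
      List.concat_eq_append, List.prod_append, List.prod_cons, List.prod_nil, mul_one]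
    have e : (fun j : Fin s => D (j.castSucc).val * C j.castSucc * (D ((j.castSucc).val + 1))⁻¹)
        = fun j : Fin s => D j.val * (fun t => C t.castSucc) j * (D (j.val + 1))⁻¹ := by
      funext j; simp [Fin.coe_castSucc]
    rw [e, ih (fun t => C t.castSucc)]
    rw [List.ofFn_succ' C, List.concat_eq_append, List.prod_append, List.prod_cons,
      List.prod_nil, mul_one]
    simp only [Fin.val_last]
    have hc : ∀ X : Mx n, (D s)⁻¹ * (D s * X) = X := fun X => by
      rw [← mul_assoc, unit_inv_mul (hD s), one_mul]
    simp only [mul_assoc, hc]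

/-! ### Family lemmas (slot 0 and pair (0,1)) -/

section fam
variable {n k : ℕ} (ψ : Fin (k+3) → Mx n → Mx n)

def R1 : Set (Mx n × Mx n) :=
  Set.range (fun T : Fin (k+2) → Mx n =>
    ((List.ofFn fun j => ψ j.succ (T j)).prod, (List.ofFn T).prod))

def R2 : Set (Mx n × Mx n) :=
  Set.range (fun T : Fin (k+1) → Mx n =>
    ((List.ofFn fun j => ψ j.succ.succ (T j)).prod, (List.ofFn T).prod))

variable (H : ∀ A : Fin (k+3) → Mx n,
    ((List.ofFn fun i => ψ i (A i)).prod).trace = ((List.ofFn A).prod).trace)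
include H

lemma h1R1 : ∀ p ∈ R1 ψ, ∀ A, (ψ 0 A * p.1).trace = (A * p.2).trace := by
  rintro p ⟨T, rfl⟩ A
  have := H (Fin.cons A T)
  rw [cons_ofFn_prod ψ A T, cons_prod A T] at this
  exact this

omit H in
lemma h2R1 : ∀ B : Mx n, ∃ p ∈ R1 ψ, p.2 = B := by
  intro B
  refine ⟨_, ⟨Fin.cons B (fun _ => 1), rfl⟩, ?_⟩
  dsimp only
  rw [cons_prod B (fun _ => 1), ofFn_one_prod, mul_one]

lemma h1R2 : ∀ p ∈ R2 ψ, ∀ D, ((ψ 0 D * ψ 1 1) * p.1).trace = (D * p.2).trace := by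
  rintro p ⟨T, rfl⟩ D
  have := H (Fin.cons D (Fin.cons 1 T))
  rw [cons2_ofFn_prod ψ D 1 T, cons2_prod D 1 T, one_mul, ← mul_assoc] at this
  exact this

omit H in
lemma h2R2 : ∀ B : Mx n, ∃ p ∈ R2 ψ, p.2 = B := by
  intro B
  refine ⟨_, ⟨Fin.cons B (fun _ => 1), rfl⟩, ?_⟩
  dsimp only
  rw [cons_prod B (fun _ => 1), ofFn_one_prod, mul_one]

lemma fam_span1 : Submodule.span ℂ (Prod.fst '' R1 ψ) = ⊤ :=
  abs_span (ψ 0) (R1 ψ) (h1R1 ψ H) (h2R1 ψ)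

lemma fam_span2 : Submodule.span ℂ (Prod.fst '' R2 ψ) = ⊤ :=
  abs_span (fun D => ψ 0 D * ψ 1 1) (R2 ψ) (h1R2 ψ H) (h2R2 ψ)

lemma fam_add (A B : Mx n) : ψ 0 (A + B) = ψ 0 A + ψ 0 B := by
  apply abs_cancel (R1 ψ) (fam_span1 ψ H)
  intro p hp
  rw [h1R1 ψ H p hp (A + B), Matrix.add_mul, Matrix.trace_add, ← h1R1 ψ H p hp A,
    ← h1R1 ψ H p hp B, ← Matrix.trace_add, ← Matrix.add_mul]

lemma fam_smul (c : ℂ) (A : Mx n) : ψ 0 (c • A) = c • ψ 0 A := by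
  apply abs_cancel (R1 ψ) (fam_span1 ψ H)
  intro p hp
  rw [h1R1 ψ H p hp (c • A), Matrix.smul_mul, Matrix.trace_smul, ← h1R1 ψ H p hp A,
    ← Matrix.trace_smul, ← Matrix.smul_mul]

lemma fam_inj : Function.Injective (ψ 0) := by
  intro A B h
  apply trace_cancel
  intro C
  obtain ⟨p, hp, rfl⟩ := h2R1 ψ C
  rw [← h1R1 ψ H p hp A, h, h1R1 ψ H p hp B]

lemma fam_rel1 (A B : Mx n) : ψ 0 A * ψ 1 B = ψ 0 (A * B) * ψ 1 1 := by
  apply abs_cancel (R2 ψ) (fam_span2 ψ H)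
  rintro p ⟨T, rfl⟩
  dsimp only
  have e1 := H (Fin.cons A (Fin.cons B T))
  rw [cons2_ofFn_prod ψ A B T, cons2_prod A B T] at e1
  have e2 := H (Fin.cons (A * B) (Fin.cons 1 T))
  rw [cons2_ofFn_prod ψ (A * B) 1 T, cons2_prod (A * B) 1 T] at e2
  calc (ψ 0 A * ψ 1 B * (List.ofFn fun j => ψ j.succ.succ (T j)).prod).trace
      = (ψ 0 A * (ψ 1 B * (List.ofFn fun j => ψ j.succ.succ (T j)).prod)).trace := by
        rw [mul_assoc]
    _ = (A * (B * (List.ofFn T).prod)).trace := e1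
    _ = ((A * B) * (1 * (List.ofFn T).prod)).trace := by rw [one_mul, ← mul_assoc]
    _ = (ψ 0 (A * B) * (ψ 1 1 * (List.ofFn fun j => ψ j.succ.succ (T j)).prod)).trace := e2.symm
    _ = (ψ 0 (A * B) * ψ 1 1 * (List.ofFn fun j => ψ j.succ.succ (T j)).prod).trace := by
        rw [mul_assoc]

lemma fam_rel2 (A B : Mx n) : ψ 0 A * ψ 1 B = ψ 0 1 * ψ 1 (A * B) := by
  apply abs_cancel (R2 ψ) (fam_span2 ψ H)
  rintro p ⟨T, rfl⟩
  dsimp only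
  have e1 := H (Fin.cons A (Fin.cons B T))
  rw [cons2_ofFn_prod ψ A B T, cons2_prod A B T] at e1
  have e2 := H (Fin.cons 1 (Fin.cons (A * B) T))
  rw [cons2_ofFn_prod ψ 1 (A * B) T, cons2_prod 1 (A * B) T] at e2
  calc (ψ 0 A * ψ 1 B * (List.ofFn fun j => ψ j.succ.succ (T j)).prod).trace
      = (ψ 0 A * (ψ 1 B * (List.ofFn fun j => ψ j.succ.succ (T j)).prod)).trace := by
        rw [mul_assoc]
    _ = (A * (B * (List.ofFn T).prod)).trace := e1
    _ = (1 * ((A * B) * (List.ofFn T).prod)).trace := by rw [one_mul, ← mul_assoc]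
    _ = (ψ 0 1 * (ψ 1 (A * B) * (List.ofFn fun j => ψ j.succ.succ (T j)).prod)).trace := e2.symm
    _ = (ψ 0 1 * ψ 1 (A * B) * (List.ofFn fun j => ψ j.succ.succ (T j)).prod).trace := by
        rw [mul_assoc]

end fam

/-! ### Inner automorphism -/

lemma inner_of_hom {n : ℕ} (hn : 1 ≤ n) (χ : Mx n → Mx n)
    (hadd : ∀ A B, χ (A + B) = χ A + χ B) (hsmul : ∀ (c : ℂ) A, χ (c • A) = c • χ A)
    (hmul : ∀ A B, χ (A * B) = χ A * χ B)
    (hinj : Function.Injective χ) :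
    ∃ S : Mx n, IsUnit S ∧ ∀ A, χ A = S * A * S⁻¹ := by
  classical
  let Lχ : Mx n →ₗ[ℂ] Mx n :=
    { toFun := χ, map_add' := hadd, map_smul' := fun c A => by simpa using hsmul c A }
  have hsurj : Function.Surjective χ := by
    have : Function.Injective ⇑Lχ := hinj
    exact LinearMap.injective_iff_surjective.mp this
  have hzero : χ 0 = 0 := by
    have := hadd 0 0
    rw [add_zero] at this
    have h2 : χ 0 + χ 0 = χ 0 + 0 := by rw [← this, add_zero]
    exact (add_left_cancel h2)
  set z : Fin n := ⟨0, hn⟩ with hz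
  set E : Mx n := Matrix.single z z 1 with hE
  have hEE : E * E = E := by rw [hE, Matrix.single_mul_single_same, one_mul]
  have hEne : E ≠ 0 := fun h => by
    have := congrFun (congrFun h z) z
    simp [hE, Matrix.single_apply_same] at this
  have hχEne : χ E ≠ 0 := fun h => hEne (hinj (h.trans hzero.symm))
  obtain ⟨p, q, hpq⟩ : ∃ p q, χ E p q ≠ 0 := by
    by_contra hc
    push_neg at hc
    exact hχEne (by ext p q; simpa using hc p q)
  set v : Fin n → ℂ := χ E *ᵥ Pi.single q 1 with hv
  have hvp : v p ≠ 0 := by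
    rw [hv, Matrix.mulVec_single]
    simpa using hpq
  have hvE : χ E *ᵥ v = v := by
    rw [hv, Matrix.mulVec_mulVec, ← hmul, hEE]
  set S : Mx n := Matrix.of (fun pp qq => (χ (Matrix.single qq z 1) *ᵥ v) pp) with hS
  have hScol : ∀ qq, (fun t => S t qq) = χ (Matrix.single qq z 1) *ᵥ v := by
    intro qq; funext t; rw [hS]; rfl
  have base : ∀ r s, χ (Matrix.single r s 1) * S = S * Matrix.single r s 1 := by
    intro r s
    ext pp qq
    have lhs_eq : (χ (Matrix.single r s 1) * S) pp qq
        = (χ (Matrix.single r s 1 * Matrix.single qq z 1) *ᵥ v) pp := by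
      rw [hmul, ← Matrix.mulVec_mulVec, ← hScol qq]
      simp [Matrix.mul_apply, Matrix.mulVec, dotProduct]
    by_cases hsq : s = qq
    · subst hsq
      rw [lhs_eq, Matrix.single_mul_single_same, one_mul]
      rw [Matrix.mul_single_apply_same]
      rw [mul_one, hS]
      rfl
    · rw [lhs_eq, Matrix.single_mul_single_of_ne (h := hsq), hzero, Matrix.zero_mulVec]
      rw [Matrix.mul_single_apply_of_ne (hbj := Ne.symm hsq)]
      simp
  have key : ∀ A, χ A * S = S * A := by
    intro A
    have hrepr : χ A = ∑ r, ∑ s, A r s • χ (Matrix.single r s 1) := by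
      conv_lhs => rw [matrix_eq_sum_single A]
      rw [show χ = ⇑Lχ from rfl, map_sum]
      refine Finset.sum_congr rfl (fun r _ => ?_)
      rw [map_sum]
      refine Finset.sum_congr rfl (fun s _ => ?_)
      rw [show Matrix.single r s (A r s) = A r s • Matrix.single r s 1 by
        rw [smul_single, smul_eq_mul, mul_one]]
      exact map_smul Lχ _ _
    rw [hrepr]
    rw [Finset.sum_mul]
    conv_rhs => rw [matrix_eq_sum_single A, Finset.mul_sum]
    refine Finset.sum_congr rfl (fun r _ => ?_)
    rw [Finset.sum_mul, Finset.mul_sum]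
    refine Finset.sum_congr rfl (fun s _ => ?_)
    rw [Matrix.smul_mul, base r s, ← Matrix.mul_smul]
    congr 1
    rw [smul_single, smul_eq_mul, mul_one]
  have hSz : S *ᵥ Pi.single z 1 = v := by
    rw [Matrix.mulVec_single]
    funext t
    simp only [Pi.smul_apply, op_smul_eq_mul, Matrix.col_apply, mul_one]
    show (χ (Matrix.single z z 1) *ᵥ v) t = v t
    rw [← hE, hvE]
  have hSsurj : ∀ y : Fin n → ℂ, ∃ x, S *ᵥ x = y := by
    intro y
    set TT : Mx n := Matrix.of (fun pp qq => if qq = p then (v p)⁻¹ * y pp else 0) with hTT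
    have hTv : TT *ᵥ v = y := by
      funext t
      simp only [hTT, Matrix.mulVec, dotProduct, Matrix.of_apply, ite_mul, zero_mul]
      rw [Finset.sum_ite_eq' Finset.univ p (fun x => (v p)⁻¹ * y t * v x)]
      simp only [Finset.mem_univ, if_true]
      rw [mul_comm ((v p)⁻¹) (y t), mul_assoc, inv_mul_cancel₀ hvp, mul_one]
    obtain ⟨C, hC⟩ := hsurj TT
    refine ⟨C *ᵥ Pi.single z 1, ?_⟩
    rw [Matrix.mulVec_mulVec, ← key C, ← Matrix.mulVec_mulVec, hSz, hC, hTv]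
  have hB : ∃ B : Mx n, S * B = 1 := by
    choose x hx using hSsurj
    refine ⟨Matrix.of (fun t qq => x (Pi.single qq 1) t), ?_⟩
    ext pp qq
    have : (S * Matrix.of (fun t qq => x (Pi.single qq 1) t)) pp qq
        = (S *ᵥ x (Pi.single qq 1)) pp := by
      simp [Matrix.mul_apply, Matrix.mulVec, dotProduct]
    rw [this, hx (Pi.single qq 1)]
    simp [Matrix.one_apply, Pi.single_apply, eq_comm]
  obtain ⟨B, hSB⟩ := hB
  have hSunit : IsUnit S := ⟨⟨S, B, hSB, mul_eq_one_comm.mp hSB⟩, rfl⟩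
  refine ⟨S, hSunit, fun A => ?_⟩
  calc χ A = χ A * (S * S⁻¹) := by rw [unit_mul_inv hSunit, mul_one]
    _ = (χ A * S) * S⁻¹ := by rw [mul_assoc]
    _ = (S * A) * S⁻¹ := by rw [key A]

end Stmt3Aux

open Stmt3Aux in
theorem stmt3 (m : ℕ) [NeZero m] (hm : 3 ≤ m) (n : ℕ) (hn : 1 ≤ n)
    (φ : Fin m → Matrix (Fin n) (Fin n) ℂ → Matrix (Fin n) (Fin n) ℂ) :
    (∀ A : Fin m → Matrix (Fin n) (Fin n) ℂ,
      Matrix.trace (List.ofFn fun i => φ i (A i)).prod = Matrix.trace (List.ofFn A).prod)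
    ↔ ∃ N : Fin m → Matrix (Fin n) (Fin n) ℂ, (∀ i, IsUnit (N i)) ∧
        ∀ i A, φ i A = N i * A * (N (i + 1))⁻¹ := by
  constructor
  · intro hH
    obtain ⟨k, rfl⟩ : ∃ k, m = k + 3 := ⟨m - 3, by omega⟩
    have Hrot : ∀ i : Fin (k+3), ∀ A : Fin (k+3) → Mx n,
        ((List.ofFn fun j => φ (j + i) (A j)).prod).trace = ((List.ofFn A).prod).trace := by
      intro i A
      have h1 := trace_rot (fun t => φ t (A (t - i))) i
      have h2 := trace_rot (fun t => A (t - i)) i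
      simp only [add_sub_cancel_right] at h1 h2
      rw [h1]
      exact (hH _).trans h2.symm
    have Fadd : ∀ (i : Fin (k+3)) (A B : Mx n), φ i (A + B) = φ i A + φ i B := by
      intro i A B
      have := fam_add (fun j => φ (j + i)) (Hrot i) A B
      simpa only [zero_add] using this
    have Fsmul : ∀ (i : Fin (k+3)) (c : ℂ) (A : Mx n), φ i (c • A) = c • φ i A := by
      intro i c A
      have := fam_smul (fun j => φ (j + i)) (Hrot i) c A
      simpa only [zero_add] using this
    have Finj : ∀ i : Fin (k+3), Function.Injective (φ i) := by
      intro i A B h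
      have := fam_inj (fun j => φ (j + i)) (Hrot i) (a₁ := A) (a₂ := B)
      simp only [zero_add] at this
      exact this h
    have Frel1 : ∀ (i : Fin (k+3)) (A B : Mx n),
        φ i A * φ (i+1) B = φ i (A * B) * φ (i+1) 1 := by
      intro i A B
      have := fam_rel1 (fun j => φ (j + i)) (Hrot i) A B
      simpa only [zero_add, add_comm 1 i] using this
    have Frel2 : ∀ (i : Fin (k+3)) (A B : Mx n),
        φ i A * φ (i+1) B = φ i 1 * φ (i+1) (A * B) := by
      intro i A B
      have := fam_rel2 (fun j => φ (j + i)) (Hrot i) A B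
      simpa only [zero_add, add_comm 1 i] using this
    have Fsurj : ∀ i : Fin (k+3), Function.Surjective (φ i) := by
      intro i
      let L : Mx n →ₗ[ℂ] Mx n :=
        { toFun := φ i, map_add' := Fadd i, map_smul' := fun c A => by simpa using Fsmul i c A }
      have : Function.Injective ⇑L := Finj i
      exact LinearMap.injective_iff_surjective.mp this
    have Fstep : ∀ (i : Fin (k+3)) (A : Mx n), φ i A * φ (i+1) 1 = φ i 1 * φ (i+1) A := by
      intro i A
      have := Frel2 i A 1
      rwa [mul_one] at this
    have hBu : ∀ i : Fin (k+3), IsUnit (φ i 1) := by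
      intro i
      obtain ⟨A, hA⟩ := Fsurj (i - 1) 1
      obtain ⟨B, hB⟩ := Fsurj (i - 1 + 1) 1
      have h := Frel1 (i - 1) A B
      rw [hA, hB, one_mul] at h
      have h2 : φ (i-1) (A*B) * φ (i-1+1) 1 = 1 := h.symm
      rw [sub_add_cancel] at h2
      exact isUnit_of_right_inv h2
    set b0 : Mx n := φ 0 1 with hb0d
    have hb0 : IsUnit b0 := hBu 0
    have hφ1 : ∀ B, φ 1 B = b0⁻¹ * (φ 0 B * φ 1 1) := by
      intro B
      have h := Fstep 0 B
      rw [zero_add] at h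
      rw [h, ← mul_assoc, unit_inv_mul hb0, one_mul]
    have hb1 : IsUnit (φ 1 1) := hBu 1
    have mult0 : ∀ A B : Mx n, φ 0 (A * B) = φ 0 A * b0⁻¹ * φ 0 B := by
      intro A B
      have h := Frel1 0 A B
      rw [zero_add] at h
      rw [hφ1 B] at h
      have h3 : (φ 0 A * b0⁻¹ * φ 0 B) * φ 1 1 = φ 0 (A*B) * φ 1 1 := by
        rw [← h]; simp [mul_assoc]
      exact (unit_right_cancel hb1 h3).symm
    set χ : Mx n → Mx n := fun A => φ 0 A * b0⁻¹ with hχ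
    have hχadd : ∀ A B, χ (A+B) = χ A + χ B := fun A B => by
      simp only [hχ, Fadd 0, Matrix.add_mul]
    have hχsmul : ∀ (c : ℂ) A, χ (c • A) = c • χ A := fun c A => by
      simp only [hχ, Fsmul 0, Matrix.smul_mul]
    have hχmul : ∀ A B, χ (A*B) = χ A * χ B := fun A B => by
      simp only [hχ]
      rw [mult0 A B]
      simp [mul_assoc]
    have hχinj : Function.Injective χ := by
      intro A B h
      apply Finj 0
      simp only [hχ] at h
      exact unit_right_cancel (unit_inv_unit hb0) h
    obtain ⟨S, hSu, hSform⟩ := inner_of_hom hn χ hχadd hχsmul hχmul hχinj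
    have hφ0 : ∀ A, φ 0 A = S * A * S⁻¹ * b0 := by
      intro A
      have h1 := hSform A
      have h2 := congrArg (· * b0) h1
      simp only [hχ] at h2
      rwa [mul_assoc, unit_inv_mul hb0, mul_one] at h2
    set b : ℕ → Mx n := fun r => φ (r : Fin (k+3)) 1 with hb
    have hbr : ∀ r, b r = φ ((r : ℕ) : Fin (k+3)) 1 := fun r => rfl
    set Pn : ℕ → Mx n := fun r => ((List.range r).map b).prod with hPn
    have hP0 : Pn 0 = 1 := by simp [hPn]
    have hPnsucc : ∀ r, Pn (r+1) = Pn r * b r := by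
      intro r
      simp only [hPn]
      rw [List.range_succ, List.map_append, List.prod_append]
      simp
    have hbu : ∀ r, IsUnit (b r) := fun r => hBu _
    have hPnu : ∀ r, IsUnit (Pn r) := by
      intro r
      induction r with
      | zero => rw [hP0]; exact isUnit_one
      | succ r ih => rw [hPnsucc r]; exact ih.mul (hbu r)
    have hb00 : b 0 = b0 := by
      rw [hbr, show ((0 : ℕ) : Fin (k+3)) = 0 from Nat.cast_zero]
    have claimA : ∀ r : ℕ, ∀ A : Mx n,
        φ ((r : ℕ) : Fin (k+3)) A = (Pn r)⁻¹ * (S * A * S⁻¹) * Pn r * b r := by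
      intro r
      induction r with
      | zero =>
        intro A
        rw [show ((0 : ℕ) : Fin (k+3)) = 0 from Nat.cast_zero, hφ0 A, hb00, hP0, inv_one,
          one_mul, mul_one]
      | succ r ih =>
        intro A
        have hcast : ((r+1 : ℕ) : Fin (k+3)) = ((r : ℕ) : Fin (k+3)) + 1 := by
          push_cast; ring
        have h1 : φ ((r : ℕ) : Fin (k+3)) A * b (r+1) = b r * φ ((r+1 : ℕ) : Fin (k+3)) A := by
          rw [hbr, hbr, hcast]
          exact Fstep _ A
        have hres : φ ((r+1 : ℕ) : Fin (k+3)) A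
            = (b r)⁻¹ * (φ ((r : ℕ) : Fin (k+3)) A * b (r+1)) := by
          rw [h1, ← mul_assoc, unit_inv_mul (hbu r), one_mul]
        rw [hres, ih A, hPnsucc r, Matrix.mul_inv_rev]
        simp only [mul_assoc]
    have claimB : Pn (k+3) = 1 := by
      have hx : ∀ A : Mx n,
          ((φ 0 A * (List.ofFn fun j : Fin (k+2) => φ j.succ 1).prod)).trace = A.trace := by
        intro A
        have h := h1R1 φ hH
          ((List.ofFn fun j : Fin (k+2) => φ j.succ ((fun _ => (1 : Mx n)) j)).prod,
            (List.ofFn (fun _ : Fin (k+2) => (1 : Mx n))).prod)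
          ⟨(fun _ => 1), rfl⟩ A
        rw [ofFn_one_prod, mul_one] at h
        exact h
      have hprod : b 0 * (List.ofFn fun j : Fin (k+2) => φ j.succ 1).prod = Pn (k+3) := by
        have h1 : (List.ofFn fun j : Fin (k+2) => φ j.succ 1)
            = (List.range (k+2)).map (fun t => b (t+1)) := by
          rw [← ofFn_nat_map (k+2) (fun t => b (t+1))]
          congr 1
          funext j
          have h2 : (((j.val + 1 : ℕ)) : Fin (k+3)) = j.succ := by
            have h3 : (((j.succ : Fin (k+3)).val : ℕ) : Fin (k+3)) = j.succ :=
              Fin.cast_val_eq_self _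
            rwa [Fin.val_succ] at h3
          show φ j.succ 1 = b (j.val + 1)
          rw [hbr, h2]
        rw [h1]
        show _ = ((List.range (k+3)).map b).prod
        conv_rhs => rw [List.range_succ_eq_map, List.map_cons, List.prod_cons]
        congr 1
        rw [List.map_map]
        rfl
      have hAll : ∀ C : Mx n, (Pn (k+3) * C).trace = ((1 : Mx n) * C).trace := by
        intro C
        have hA := hx (S⁻¹ * C * S)
        rw [hφ0 (S⁻¹ * C * S)] at hA
        have e0 : S * (S⁻¹ * C * S) * S⁻¹ = C := by
          simp only [← mul_assoc]
          rw [unit_mul_inv hSu, one_mul, mul_assoc, unit_mul_inv hSu, mul_one]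
        rw [e0] at hA
        have e1 : C * b0 * (List.ofFn fun j : Fin (k+2) => φ j.succ 1).prod
            = C * Pn (k+3) := by
          rw [mul_assoc, ← hb00, hprod]
        rw [e1] at hA
        calc (Pn (k+3) * C).trace = (C * Pn (k+3)).trace := Matrix.trace_mul_comm _ _
          _ = (S⁻¹ * C * S).trace := hA
          _ = (S * (S⁻¹ * C)).trace := Matrix.trace_mul_comm _ _
          _ = ((1 : Mx n) * C).trace := by rw [← mul_assoc, unit_mul_inv hSu]
      exact trace_cancel _ _ hAll
    refine ⟨fun i => (Pn i.val)⁻¹ * S, fun i => (unit_inv_unit (hPnu i.val)).mul hSu, ?_⟩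
    intro i A
    have hNinv : ∀ j : Fin (k+3), ((Pn j.val)⁻¹ * S)⁻¹ = S⁻¹ * Pn j.val := by
      intro j
      rw [Matrix.mul_inv_rev,
        Matrix.nonsing_inv_nonsing_inv _ ((Matrix.isUnit_iff_isUnit_det _).mp (hPnu j.val))]
    have hCA := claimA i.val A
    rw [Fin.cast_val_eq_self] at hCA
    by_cases hcase : i.val + 1 < k + 3
    · have hval : (i+1).val = i.val + 1 := by
        have hlt : i < Fin.last (k+2) := by
          rw [Fin.lt_iff_val_lt_val, Fin.val_last]
          omega
        exact Fin.val_add_one_of_lt hlt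
      rw [hNinv (i+1), hval, hCA, hPnsucc i.val]
      simp only [mul_assoc]
    · have hival : i.val + 1 = k + 3 := by have := i.isLt; omega
      have hlast : i = Fin.last (k+2) := Fin.ext (by rw [Fin.val_last]; omega)
      have hi1 : i + 1 = 0 := by rw [hlast]; exact Fin.last_add_one _
      rw [hi1, hNinv 0, hCA]
      have hPB : Pn i.val * b i.val = 1 := by
        rw [← hPnsucc, hival]
        exact claimB
      simp only [Fin.val_zero, hP0, mul_assoc, hPB]
  · rintro ⟨N, hNu, hNf⟩ A
    have hL : (List.ofFn fun i => φ i (A i)) = List.ofFn fun i => N i * A i * (N (i+1))⁻¹ := by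
      congr 1
      funext i
      rw [hNf]
    rw [hL]
    have e : (fun i : Fin m => N i * A i * (N (i+1))⁻¹)
        = fun j : Fin m => (fun r : ℕ => N ((r : ℕ) : Fin m)) j.val * A j
            * ((fun r : ℕ => N ((r : ℕ) : Fin m)) (j.val + 1))⁻¹ := by
      funext j
      simp only
      rw [Fin.cast_val_eq_self]
      congr 2
      rw [show ((j.val + 1 : ℕ) : Fin m) = ((j.val : ℕ) : Fin m) + 1 by push_cast; ring,
        Fin.cast_val_eq_self]
    rw [e, tele_nat (fun r => N ((r : ℕ) : Fin m)) (fun r => hNu _) m A]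
    rw [show ((0 : ℕ) : Fin m) = 0 from Nat.cast_zero, Fin.natCast_self]
    rw [Matrix.trace_mul_comm, ← mul_assoc, unit_inv_mul (hNu 0), one_mul]
end

section
/- If n > k ≥ 1 and m ≥ 2, then there do not exist linear maps φ₁,…,φ_m: M_n → M_k such that tr(φ₁(A₁)⋯φ_m(A_m)) = tr(A₁⋯A_m) for all A₁,…,A_m ∈ M_n. -/
open Matrix

theorem stmt7 (n k m : ℕ) (hk : 1 ≤ k) (hkn : k < n) (hm : 2 ≤ m) :
    ¬ ∃ φ : Fin m → (Matrix (Fin n) (Fin n) ℂ →ₗ[ℂ] Matrix (Fin k) (Fin k) ℂ),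
        ∀ A : Fin m → Matrix (Fin n) (Fin n) ℂ,
          Matrix.trace (List.ofFn fun i => φ i (A i)).prod =
            Matrix.trace (List.ofFn A).prod := by
  rintro ⟨φ, hφ⟩
  obtain ⟨m, rfl⟩ : ∃ m', m = m' + 2 := ⟨m - 2, by omega⟩
  -- φ 0 is not injective by dimension count
  have hninj : ¬ Function.Injective (φ 0) := by
    intro hinj
    have := LinearMap.finrank_le_finrank_of_injective hinj
    rw [Module.finrank_matrix, Module.finrank_matrix] at this
    simp only [Fintype.card_fin] at this
    simp [Module.finrank_self] at this
    nlinarith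
  rw [Function.not_injective_iff] at hninj
  obtain ⟨a, b, hab, hne⟩ := hninj
  set M := a - b with hM
  have hφM : φ 0 M = 0 := by
    rw [hM, map_sub, hab, sub_self]
  have hMne : M ≠ 0 := sub_ne_zero_of_ne hne
  -- key: trace (M * B) = 0 for all B
  have key : ∀ B : Matrix (Fin n) (Fin n) ℂ,
      Matrix.trace (M * B) = 0 := by
    intro B
    have := hφ (Fin.cons M (Fin.cons B fun _ => (1 : Matrix (Fin n) (Fin n) ℂ)))
    simp only [List.ofFn_succ, Fin.cons_zero, Fin.cons_succ, List.prod_cons, hφM,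
      zero_mul, Matrix.trace_zero, List.ofFn_const, List.prod_replicate, one_pow,
      mul_one] at this
    exact this.symm
  -- nondegeneracy of the trace form
  apply hMne
  have h0 := key Mᴴ
  have htr : Matrix.trace (M * Mᴴ) =
      ((∑ i, ∑ j, Complex.normSq (M i j) : ℝ) : ℂ) := by
    rw [Matrix.trace]
    simp only [Matrix.diag_apply, Matrix.mul_apply, Matrix.conjTranspose_apply]
    push_cast
    refine Finset.sum_congr rfl fun i _ => Finset.sum_congr rfl fun j _ => ?_
    rw [← Complex.mul_conj]
    rfl
  rw [htr] at h0
  have hsum : (∑ i, ∑ j, Complex.normSq (M i j) : ℝ) = 0 := by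
    exact_mod_cast h0
  ext i j
  have h1 : ∀ i ∈ Finset.univ, (0:ℝ) ≤ ∑ j, Complex.normSq (M i j) :=
    fun i _ => Finset.sum_nonneg fun j _ => Complex.normSq_nonneg _
  have h2 := (Finset.sum_eq_zero_iff_of_nonneg h1).mp hsum i (Finset.mem_univ i)
  have h3 := (Finset.sum_eq_zero_iff_of_nonneg
    (fun j _ => Complex.normSq_nonneg (M i j))).mp h2 j (Finset.mem_univ j)
  simpa using Complex.normSq_eq_zero.mp h3
end

section
/- Suppose n ≤ k and linear maps φ₁, φ₂: M_n → M_k satisfy tr(φ₁(A)φ₂(B)) = tr(AB) for all A, B ∈ M_n. Then there exist linear bijections φ̃₁, φ̃₂: M_k → M_k such that tr(φ̃₁(Ã)φ̃₂(B̃)) = tr(Ã B̃) for all Ã, B̃ ∈ M_k, and φ̃ᵢ(A ⊕ 0_{k−n}) = φᵢ(A) for all A ∈ M_n and i = 1, 2. -/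
open Matrix

/-- The embedding `A ↦ A ⊕ 0_{k-n}` of `n×n` matrices into `k×k` matrices. -/
def embedBlock (n k : ℕ) (A : Matrix (Fin n) (Fin n) ℂ) : Matrix (Fin k) (Fin k) ℂ :=
  Matrix.of fun p q =>
    if hp : (p : ℕ) < n then if hq : (q : ℕ) < n then A ⟨p, hp⟩ ⟨q, hq⟩ else 0 else 0

open LinearMap Module

private lemma trace_mul_std (m : ℕ) (X : Matrix (Fin m) (Fin m) ℂ) (i j : Fin m) :
    Matrix.trace (X * Matrix.single j i (1 : ℂ)) = X i j := by
  rw [Matrix.trace, Finset.sum_eq_single i]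
  · simp [Matrix.diag]
  · intro b _ hb
    simp [Matrix.diag, hb]
  · simp

private lemma sum_ext {n k : ℕ} (hnk : n ≤ k) (g : Fin k → ℂ)
    (hg : ∀ p : Fin k, n ≤ (p : ℕ) → g p = 0) :
    ∑ p : Fin k, g p = ∑ p : Fin n, g (Fin.castLE hnk p) := by
  have h1 : ∑ p : Fin k, g p
      = ∑ i ∈ Finset.range k, (fun i => if h : i < k then g ⟨i, h⟩ else 0) i := by
    rw [← Fin.sum_univ_eq_sum_range]
    exact Finset.sum_congr rfl fun p _ => by simp
  have h2 : ∑ p : Fin n, g (Fin.castLE hnk p)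
      = ∑ i ∈ Finset.range n, (fun i => if h : i < k then g ⟨i, h⟩ else 0) i := by
    rw [← Fin.sum_univ_eq_sum_range]
    refine Finset.sum_congr rfl fun p _ => ?_
    rw [dif_pos (p.2.trans_le hnk)]
    rfl
  rw [h1, h2]
  refine (Finset.sum_subset (Finset.range_subset_range.mpr hnk) ?_).symm
  intro i hi hni
  simp only [Finset.mem_range] at hi hni
  simp only [dif_pos hi]
  exact hg ⟨i, hi⟩ (le_of_not_gt hni)

private lemma trace_embed {n k : ℕ} (hnk : n ≤ k) (A B : Matrix (Fin n) (Fin n) ℂ) :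
    Matrix.trace (embedBlock n k A * embedBlock n k B) = Matrix.trace (A * B) := by
  have hA0 : ∀ (M : Matrix (Fin n) (Fin n) ℂ) (p q : Fin k), n ≤ (p : ℕ) →
      embedBlock n k M p q = 0 := by
    intro M p q hp; simp [embedBlock, Nat.not_lt.mpr hp]
  have hA0' : ∀ (M : Matrix (Fin n) (Fin n) ℂ) (p q : Fin k), n ≤ (q : ℕ) →
      embedBlock n k M p q = 0 := by
    intro M p q hq
    simp only [embedBlock, Matrix.of_apply]
    split
    · rw [dif_neg (Nat.not_lt.mpr hq)]
    · rfl
  have hcast : ∀ (M : Matrix (Fin n) (Fin n) ℂ) (p q : Fin n),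
      embedBlock n k M (Fin.castLE hnk p) (Fin.castLE hnk q) = M p q := by
    intro M p q
    simp [embedBlock, p.2, q.2]
  rw [Matrix.trace, Matrix.trace]
  simp only [Matrix.diag_apply]
  have h1 : ∑ p : Fin k, (embedBlock n k A * embedBlock n k B) p p
      = ∑ p : Fin n,
        (embedBlock n k A * embedBlock n k B) (Fin.castLE hnk p) (Fin.castLE hnk p) := by
    apply sum_ext hnk
    intro p hp
    rw [Matrix.mul_apply]
    exact Finset.sum_eq_zero fun q _ => by rw [hA0 A p q hp, zero_mul]
  rw [h1]
  refine Finset.sum_congr rfl fun p _ => ?_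
  rw [Matrix.mul_apply, Matrix.mul_apply]
  rw [sum_ext hnk
    (fun q => embedBlock n k A (Fin.castLE hnk p) q * embedBlock n k B q (Fin.castLE hnk p))
    (fun q hq => by
      show embedBlock n k A (Fin.castLE hnk p) q * embedBlock n k B q (Fin.castLE hnk p) = 0
      rw [hA0' A _ q hq, zero_mul])]
  exact Finset.sum_congr rfl fun q _ => by simp only [hcast]

/-- Abstract extension lemma. -/
private lemma extend_pairing {K V U : Type*} [Field K]
    [AddCommGroup U] [Module K U] [AddCommGroup V] [Module K V]
    [FiniteDimensional K U] [FiniteDimensional K V]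
    (B : LinearMap.BilinForm K V) (hBsymm : ∀ x y, B x y = B y x)
    (hB : LinearMap.BilinForm.Nondegenerate B)
    (e f₁ f₂ : U →ₗ[K] V)
    (hB₀ : LinearMap.BilinForm.Nondegenerate (B.compl₁₂ e e))
    (hf : ∀ a b, B (f₁ a) (f₂ b) = B (e a) (e b)) :
    ∃ F₁ F₂ : V →ₗ[K] V, Function.Bijective F₁ ∧ Function.Bijective F₂ ∧
      (∀ x y, B (F₁ x) (F₂ y) = B x y) ∧
      ∀ a, F₁ (e a) = f₁ a ∧ F₂ (e a) = f₂ a := by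
  classical
  set B₀ := B.compl₁₂ e e with hB₀def
  have hB₀app : ∀ a b, B₀ a b = B (e a) (e b) := fun a b => by
    simp [hB₀def]
  have hB₀symm : ∀ a b, B₀ a b = B₀ b a := fun a b => by
    rw [hB₀app, hB₀app, hBsymm]
  have he : Function.Injective e := by
    rw [← LinearMap.ker_eq_bot, LinearMap.ker_eq_bot']
    intro a ha
    exact hB₀.1 a fun c => by rw [hB₀app, ha, map_zero, LinearMap.zero_apply]
  have hf₁ : Function.Injective f₁ := by
    rw [← LinearMap.ker_eq_bot, LinearMap.ker_eq_bot']
    intro a ha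
    exact hB₀.1 a fun c => by
      rw [hB₀app, ← hf, ha, map_zero, LinearMap.zero_apply]
  have hf₂ : Function.Injective f₂ := by
    rw [← LinearMap.ker_eq_bot, LinearMap.ker_eq_bot']
    intro b hb
    exact hB₀.1 b fun c => by
      rw [hB₀symm, hB₀app, ← hf c b, hb, map_zero]
  have hD : Function.Surjective (B : V →ₗ[K] Module.Dual K V) := fun φ =>
    ⟨(LinearMap.BilinForm.toDual B hB).symm φ, LinearMap.ext fun x =>
      LinearMap.BilinForm.apply_toDual_symm_apply (hB := hB) φ x⟩
  set T : V →ₗ[K] Module.Dual K U := f₂.dualMap ∘ₗ (B : V →ₗ[K] Module.Dual K V)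
    with hTdef
  have hTapp : ∀ v b, T v b = B v (f₂ b) := fun v b => rfl
  have hTsurj : Function.Surjective T :=
    (LinearMap.dualMap_surjective_of_injective hf₂).comp hD
  set T₀ : V →ₗ[K] Module.Dual K U := e.dualMap ∘ₗ (B : V →ₗ[K] Module.Dual K V)
    with hT₀def
  have hT₀app : ∀ v b, T₀ v b = B v (e b) := fun v b => rfl
  set Kk := LinearMap.ker T with hKkdef
  have hrank : finrank K U + finrank K Kk = finrank K V := by
    have h1 := LinearMap.finrank_range_add_finrank_ker T
    rwa [LinearMap.range_eq_top.mpr hTsurj, finrank_top, Subspace.dual_finrank_eq] at h1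
  set W₁ := LinearMap.range f₁ with hW₁def
  have hW₁ : finrank K W₁ = finrank K U := LinearMap.finrank_range_of_inj hf₁
  have hdisj : Disjoint W₁ Kk := by
    rw [Submodule.disjoint_def]
    intro x hx hxK
    obtain ⟨a, rfl⟩ := hx
    have hTz : T (f₁ a) = 0 := LinearMap.mem_ker.mp hxK
    have ha : a = 0 := hB₀.1 a fun c => by
      rw [hB₀app, ← hf a c, ← hTapp, hTz, LinearMap.zero_apply]
    rw [ha, map_zero]
  have hsup : W₁ ⊔ Kk = ⊤ := by
    apply Submodule.eq_top_of_finrank_eq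
    have h2 := Submodule.finrank_sup_add_finrank_inf_eq W₁ Kk
    rw [disjoint_iff.mp hdisj, finrank_bot, add_zero] at h2
    omega
  obtain ⟨r, hr⟩ := e.exists_leftInverse_of_injective (LinearMap.ker_eq_bot.mpr he)
  have hre : ∀ a, r (e a) = a := fun a => congrArg (· a) hr
  set Q : V →ₗ[K] V := LinearMap.id - e ∘ₗ r with hQdef
  have hQapp : ∀ v, Q v = v - e (r v) := fun v => rfl
  have hQe : ∀ a, Q (e a) = 0 := fun a => by rw [hQapp, hre, sub_self]
  have hrQ : ∀ v, r (Q v) = 0 := fun v => by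
    rw [hQapp, map_sub, hre, sub_self]
  have hQQ : ∀ v, Q (Q v) = Q v := fun v => by
    rw [hQapp (Q v), hrQ, map_zero, sub_zero]
  have hdecomp : ∀ v, e (r v) + Q v = v := fun v => by
    rw [hQapp]; abel
  have hkerQ : LinearMap.ker Q = LinearMap.range e := by
    apply le_antisymm
    · intro v hv
      have h : Q v = 0 := hv
      rw [hQapp] at h
      exact ⟨r v, (sub_eq_zero.mp h).symm⟩
    · rintro v ⟨a, rfl⟩
      exact LinearMap.mem_ker.mpr (hQe a)
  have hrankQ : finrank K (LinearMap.range Q) = finrank K Kk := by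
    have h3 := LinearMap.finrank_range_add_finrank_ker Q
    rw [hkerQ, LinearMap.finrank_range_of_inj he] at h3
    omega
  set j : LinearMap.range Q ≃ₗ[K] Kk := LinearEquiv.ofFinrankEq _ _ hrankQ with hjdef
  set g : V →ₗ[K] V :=
    Kk.subtype ∘ₗ (j : LinearMap.range Q →ₗ[K] Kk) ∘ₗ Q.rangeRestrict with hgdef
  have hgapp : ∀ v, g v = (j ⟨Q v, LinearMap.mem_range_self Q v⟩ : V) := fun v => rfl
  have hge : ∀ a, g (e a) = 0 := fun a => by
    rw [hgapp]
    have h : (⟨Q (e a), LinearMap.mem_range_self Q (e a)⟩ : LinearMap.range Q) = 0 :=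
      Subtype.ext (hQe a)
    rw [h, map_zero, Submodule.coe_zero]
  have hgK : ∀ v, g v ∈ Kk := fun v => by rw [hgapp]; exact (j _).2
  set S := LinearMap.BilinForm.toDual B₀ hB₀ with hSdef
  have hSapp : ∀ a b, S a b = B₀ a b := fun a b => rfl
  set F₁ : V →ₗ[K] V :=
    f₁ ∘ₗ r + f₁ ∘ₗ (S.symm : Module.Dual K U →ₗ[K] U) ∘ₗ T₀ ∘ₗ Q + g with hF₁def
  have hF₁app : ∀ v, F₁ v = f₁ (r v) + f₁ (S.symm (T₀ (Q v))) + g v := fun v => rfl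
  have hF₁e : ∀ a, F₁ (e a) = f₁ a := fun a => by
    rw [hF₁app, hre, hQe, map_zero, map_zero, map_zero, hge, add_zero, add_zero]
  have hkey : ∀ v b, B (F₁ v) (f₂ b) = B v (e b) := by
    intro v b
    rw [hF₁app, map_add, map_add, LinearMap.add_apply, LinearMap.add_apply]
    have h1 : B (f₁ (r v)) (f₂ b) = B (e (r v)) (e b) := hf _ _
    have h2 : B (f₁ (S.symm (T₀ (Q v)))) (f₂ b) = B (Q v) (e b) := by
      rw [hf, ← hB₀app]
      have h : B₀ (S.symm (T₀ (Q v))) b = S (S.symm (T₀ (Q v))) b := (hSapp _ _).symm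
      rw [h, LinearEquiv.apply_symm_apply, hT₀app]
    have h3 : B (g v) (f₂ b) = 0 := by
      have h := LinearMap.mem_ker.mp (hgK v)
      rw [← hTapp, h, LinearMap.zero_apply]
    rw [h1, h2, h3, add_zero, ← LinearMap.add_apply, ← map_add, hdecomp]
  have hF₁surj : Function.Surjective F₁ := by
    intro v
    have hv : v ∈ W₁ ⊔ Kk := hsup ▸ Submodule.mem_top
    obtain ⟨y, hy, z, hz, rfl⟩ := Submodule.mem_sup.mp hv
    obtain ⟨a', rfl⟩ := hy
    set w : V := ((j.symm ⟨z, hz⟩ : LinearMap.range Q) : V) with hwdef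
    have hwQ : w ∈ LinearMap.range Q := (j.symm ⟨z, hz⟩).2
    obtain ⟨u, hu⟩ := hwQ
    have hQw : Q w = w := by rw [← hu, hQQ]
    have hrw : r w = 0 := by rw [← hu, hrQ]
    have hgw : g w = z := by
      rw [hgapp]
      have h : (⟨Q w, LinearMap.mem_range_self Q w⟩ : LinearMap.range Q)
          = j.symm ⟨z, hz⟩ := Subtype.ext hQw
      rw [h, LinearEquiv.apply_symm_apply]
    refine ⟨e (a' - S.symm (T₀ w)) + w, ?_⟩
    rw [map_add, hF₁e, hF₁app w, hrw, hQw, hgw, map_sub, map_zero]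
    abel
  have hF₁bij : Function.Bijective F₁ :=
    ⟨LinearMap.injective_iff_surjective.mpr hF₁surj, hF₁surj⟩
  set F₁e := LinearEquiv.ofBijective F₁ hF₁bij with hF₁edef
  set D := LinearMap.BilinForm.toDual B hB with hDdef
  set F₂e : V ≃ₗ[K] V := D ≪≫ₗ F₁e.dualMap.symm ≪≫ₗ D.symm with hF₂def
  have hF₂app : ∀ y, F₂e y = D.symm (F₁e.dualMap.symm (D y)) := fun y => rfl
  have hpair : ∀ x y, B (F₁ x) (F₂e y) = B x y := by
    intro x y
    have h1 : D (F₂e y) = F₁e.dualMap.symm (D y) := by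
      rw [hF₂app, LinearEquiv.apply_symm_apply]
    have h2 : B (F₁ x) (F₂e y) = (F₁e.dualMap (D (F₂e y))) x := by
      rw [hBsymm]; rfl
    rw [h2, h1, LinearEquiv.apply_symm_apply]
    show B y x = B x y
    exact hBsymm y x
  have hF₂e : ∀ b, F₂e (e b) = f₂ b := by
    intro b
    have h1 : F₁e.dualMap (D (f₂ b)) = D (e b) := by
      ext x
      show B (f₂ b) (F₁ x) = B (e b) x
      rw [hBsymm (f₂ b) (F₁ x), hkey x b, hBsymm x (e b)]
    rw [hF₂app, ← h1, LinearEquiv.symm_apply_apply, LinearEquiv.symm_apply_apply]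
  exact ⟨F₁, F₂e.toLinearMap, hF₁bij, F₂e.bijective, fun x y => hpair x y,
    fun a => ⟨hF₁e a, hF₂e a⟩⟩

theorem stmt8 (n k : ℕ) (hnk : n ≤ k)
    (φ₁ φ₂ : Matrix (Fin n) (Fin n) ℂ →ₗ[ℂ] Matrix (Fin k) (Fin k) ℂ)
    (htr : ∀ A B : Matrix (Fin n) (Fin n) ℂ,
      Matrix.trace (φ₁ A * φ₂ B) = Matrix.trace (A * B)) :
    ∃ Φ₁ Φ₂ : Matrix (Fin k) (Fin k) ℂ →ₗ[ℂ] Matrix (Fin k) (Fin k) ℂ,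
      Function.Bijective Φ₁ ∧ Function.Bijective Φ₂ ∧
      (∀ X Y : Matrix (Fin k) (Fin k) ℂ,
        Matrix.trace (Φ₁ X * Φ₂ Y) = Matrix.trace (X * Y)) ∧
      (∀ A : Matrix (Fin n) (Fin n) ℂ,
        Φ₁ (embedBlock n k A) = φ₁ A ∧ Φ₂ (embedBlock n k A) = φ₂ A) := by
  classical
  let e : Matrix (Fin n) (Fin n) ℂ →ₗ[ℂ] Matrix (Fin k) (Fin k) ℂ :=
    { toFun := embedBlock n k
      map_add' := fun A A' => by
        ext p q
        simp only [embedBlock, Matrix.of_apply, Matrix.add_apply]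
        split_ifs <;> simp
      map_smul' := fun c A => by
        ext p q
        simp only [embedBlock, Matrix.of_apply, Matrix.smul_apply, RingHom.id_apply,
          smul_eq_mul]
        split_ifs <;> simp }
  let B : LinearMap.BilinForm ℂ (Matrix (Fin k) (Fin k) ℂ) :=
    LinearMap.mk₂ ℂ (fun X Y => Matrix.trace (X * Y))
      (fun X X' Y => by simp [add_mul])
      (fun c X Y => by simp [smul_mul_assoc])
      (fun X Y Y' => by simp [mul_add])
      (fun c X Y => by simp [mul_smul_comm])
  have hBapp : ∀ X Y, B X Y = Matrix.trace (X * Y) := fun X Y => rfl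
  have hBsymm : ∀ X Y, B X Y = B Y X := fun X Y => by
    rw [hBapp, hBapp, Matrix.trace_mul_comm]
  have hB : LinearMap.BilinForm.Nondegenerate B := by
    refine (LinearMap.IsRefl.nondegenerate_iff_separatingLeft
      (fun x y h => by rw [hBsymm]; exact h)).mpr ?_
    intro X hX
    ext i j
    rw [Matrix.zero_apply, ← trace_mul_std k X i j]
    exact hX _
  have hB₀ : LinearMap.BilinForm.Nondegenerate (B.compl₁₂ e e) := by
    refine (LinearMap.IsRefl.nondegenerate_iff_separatingLeft
      (fun x y h => by rw [LinearMap.compl₁₂_apply] at h ⊢; rw [hBsymm]; exact h)).mpr ?_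
    intro A hA
    have hA' : ∀ C, Matrix.trace (A * C) = 0 := fun C => by
      have h := hA C
      rw [LinearMap.compl₁₂_apply] at h
      have h2 : Matrix.trace (embedBlock n k A * embedBlock n k C) = 0 := h
      rwa [trace_embed hnk] at h2
    ext i j
    rw [Matrix.zero_apply, ← trace_mul_std n A i j]
    exact hA' _
  have hf : ∀ a b, B (φ₁ a) (φ₂ b) = B (e a) (e b) := fun a b => by
    rw [hBapp, hBapp, htr]
    exact (trace_embed hnk a b).symm
  obtain ⟨F₁, F₂, h₁, h₂, h₃, h₄⟩ := extend_pairing B hBsymm hB e φ₁ φ₂ hB₀ hf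
  exact ⟨F₁, F₂, h₁, h₂, fun X Y => h₃ X Y, fun A => h₄ A⟩
end

section
/- Suppose maps φ, ψ: P_n → P̄_n extend to linear maps on Hermitian matrices and satisfy tr(φ(A)ψ(B)) = tr(AB) for all A, B ∈ P_n, with ψ a linear bijection on H_n. Then φ(I) is invertible (hence positive definite). -/
open Matrix ComplexOrder

/-- Conjugation of a positive definite matrix by a unitary is positive definite. -/
lemma aux_posDef_unitary_conj {n : ℕ} {U D : Matrix (Fin n) (Fin n) ℂ}
    (hU : U ∈ Matrix.unitaryGroup (Fin n) ℂ) (hD : D.PosDef) :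
    (U * D * Uᴴ).PosDef := by
  have hUU : U * Uᴴ = 1 := (Matrix.mem_unitaryGroup_iff.mp hU)
  refine Matrix.PosDef.of_dotProduct_mulVec_pos ?_ ?_
  · have := Matrix.isHermitian_conjTranspose_mul_mul Uᴴ hD.1
    simpa using this
  · intro x hx
    have hy : Uᴴ *ᵥ x ≠ 0 := by
      intro h
      apply hx
      have : U *ᵥ (Uᴴ *ᵥ x) = 0 := by rw [h, Matrix.mulVec_zero]
      rwa [Matrix.mulVec_mulVec, hUU, Matrix.one_mulVec] at this
    have key : star x ⬝ᵥ ((U * D * Uᴴ) *ᵥ x)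
        = star (Uᴴ *ᵥ x) ⬝ᵥ (D *ᵥ (Uᴴ *ᵥ x)) := by
      rw [← Matrix.mulVec_mulVec, ← Matrix.mulVec_mulVec, Matrix.dotProduct_mulVec (star x),
        Matrix.star_mulVec, Matrix.conjTranspose_conjTranspose]
    rw [key]
    exact hD.dotProduct_mulVec_pos hy

/-- Any Hermitian matrix plus a large multiple of the identity is positive definite. -/
lemma aux_exists_posDef_add {n : ℕ} {A : Matrix (Fin n) (Fin n) ℂ}
    (hA : A.IsHermitian) :
    ∃ c : ℝ, 0 < c ∧ (A + c • (1 : Matrix (Fin n) (Fin n) ℂ)).PosDef := by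
  classical
  set c : ℝ := 1 + ∑ i, |hA.eigenvalues i| with hc
  have hcpos : 0 < c := by
    have : (0:ℝ) ≤ ∑ i, |hA.eigenvalues i| := Finset.sum_nonneg fun i _ => abs_nonneg _
    linarith
  refine ⟨c, hcpos, ?_⟩
  have hsmul : c • (1 : Matrix (Fin n) (Fin n) ℂ) = (c : ℂ) • 1 := by
    ext i j; simp [Complex.real_smul]
  set U : Matrix (Fin n) (Fin n) ℂ := (hA.eigenvectorUnitary : Matrix (Fin n) (Fin n) ℂ)
  have hU : U ∈ Matrix.unitaryGroup (Fin n) ℂ := hA.eigenvectorUnitary.2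
  have hUU : U * Uᴴ = 1 := Matrix.mem_unitaryGroup_iff.mp hU
  have hspec : A = U * Matrix.diagonal (RCLike.ofReal ∘ hA.eigenvalues) * Uᴴ :=
    hA.spectral_theorem
  have h1 : c • (1 : Matrix (Fin n) (Fin n) ℂ) = U * ((c : ℂ) • 1) * Uᴴ := by
    rw [Matrix.mul_smul, Matrix.smul_mul, Matrix.mul_one, hUU, hsmul]
  have heq : A + c • (1 : Matrix (Fin n) (Fin n) ℂ)
      = U * (Matrix.diagonal (RCLike.ofReal ∘ hA.eigenvalues) + (c : ℂ) • 1) * Uᴴ := by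
    rw [Matrix.mul_add, Matrix.add_mul, ← hspec, ← h1]
  have hdiag : Matrix.diagonal (RCLike.ofReal ∘ hA.eigenvalues) + (c : ℂ) • 1
      = Matrix.diagonal (fun i => ((hA.eigenvalues i + c : ℝ) : ℂ)) := by
    rw [Matrix.smul_one_eq_diagonal, Matrix.diagonal_add]
    congr 1
    funext i
    simp [Function.comp]
  rw [heq, hdiag]
  apply aux_posDef_unitary_conj hU
  rw [Matrix.posDef_diagonal_iff]
  intro i
  have h2 : -|hA.eigenvalues i| ≤ hA.eigenvalues i := neg_abs_le _
  have h3 : |hA.eigenvalues i| ≤ ∑ j, |hA.eigenvalues j| :=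
    Finset.single_le_sum (f := fun j => |hA.eigenvalues j|)
      (fun j _ => abs_nonneg _) (Finset.mem_univ i)
  have h4 : (0:ℝ) < hA.eigenvalues i + c := by simp only [hc]; linarith
  exact_mod_cast h4

lemma aux_mul_vecMulVec {n : ℕ} (M : Matrix (Fin n) (Fin n) ℂ) (x : Fin n → ℂ) :
    M * Matrix.vecMulVec x (star x) = Matrix.vecMulVec (M *ᵥ x) (star x) := by
  ext i k
  simp only [Matrix.mul_apply, Matrix.vecMulVec_apply, Matrix.mulVec, dotProduct,
    Pi.star_apply, Finset.sum_mul]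
  exact Finset.sum_congr rfl fun j _ => by ring

lemma aux_trace_mul_vecMulVec {n : ℕ} (M : Matrix (Fin n) (Fin n) ℂ)
    (x : Fin n → ℂ) :
    Matrix.trace (M * Matrix.vecMulVec x (star x)) = star x ⬝ᵥ (M *ᵥ x) := by
  rw [aux_mul_vecMulVec]
  simp only [Matrix.trace, Matrix.diag, Matrix.vecMulVec_apply, dotProduct,
    Pi.star_apply]
  exact Finset.sum_congr rfl fun i _ => by ring

lemma aux_vecMulVec_mulVec {n : ℕ} (y x : Fin n → ℂ) :
    Matrix.vecMulVec y (star y) *ᵥ x = (star y ⬝ᵥ x) • y := by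
  funext i
  simp only [Matrix.mulVec, Matrix.vecMulVec_apply, dotProduct, Pi.smul_apply,
    smul_eq_mul, Pi.star_apply, Finset.sum_mul]
  exact Finset.sum_congr rfl fun j _ => by ring

lemma aux_vecMulVec_posSemidef {n : ℕ} (y : Fin n → ℂ) :
    (Matrix.vecMulVec y (star y)).PosSemidef := by
  refine Matrix.PosSemidef.of_dotProduct_mulVec_nonneg ?_ ?_
  · ext i j
    simp [Matrix.vecMulVec_apply, Matrix.conjTranspose_apply, mul_comm]
  · intro x
    have hsd : star x ⬝ᵥ y = star (star y ⬝ᵥ x) := by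
      simp [dotProduct, star_sum, star_mul', mul_comm]
    rw [aux_vecMulVec_mulVec, dotProduct_smul, smul_eq_mul, hsd]
    exact mul_star_self_nonneg _

lemma aux_posSemidef_trace_zero {n : ℕ} {C : Matrix (Fin n) (Fin n) ℂ}
    (hC : C.PosSemidef) (htr : Matrix.trace C = 0) : C = 0 := by
  exact hC.trace_eq_zero_iff.mp htr

theorem stmt13 (n : ℕ)
    (φ ψ : Matrix (Fin n) (Fin n) ℂ →ₗ[ℝ] Matrix (Fin n) (Fin n) ℂ)
    (hφ : ∀ A, A.PosDef → (φ A).PosSemidef)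
    (hψ : ∀ A, A.PosDef → (ψ A).PosSemidef)
    (hψbij : Set.BijOn ψ {A : Matrix (Fin n) (Fin n) ℂ | A.IsHermitian}
      {A : Matrix (Fin n) (Fin n) ℂ | A.IsHermitian})
    (htr : ∀ A B : Matrix (Fin n) (Fin n) ℂ, A.PosDef → B.PosDef →
      Matrix.trace (φ A * ψ B) = Matrix.trace (A * B)) :
    IsUnit (φ 1) ∧ (φ 1).PosDef := by
  -- scalar matrices are positive definite
  have hscal : ∀ c : ℝ, 0 < c → (c • (1 : Matrix (Fin n) (Fin n) ℂ)).PosDef := by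
    intro c hc
    have h : c • (1 : Matrix (Fin n) (Fin n) ℂ) = Matrix.diagonal (fun _ => (c : ℂ)) := by
      rw [show c • (1 : Matrix (Fin n) (Fin n) ℂ) = (c : ℂ) • 1 by
        ext i j; simp [Complex.real_smul], Matrix.smul_one_eq_diagonal]
    rw [h, Matrix.posDef_diagonal_iff]
    intro _; exact_mod_cast hc
  -- extend the trace identity to Hermitian matrices by linearity
  have htr1 : ∀ A B : Matrix (Fin n) (Fin n) ℂ, A.PosDef → B.IsHermitian →
      Matrix.trace (φ A * ψ B) = Matrix.trace (A * B) := by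
    intro A B hA hB
    obtain ⟨c, hc, hBc⟩ := aux_exists_posDef_add hB
    have hψB : ψ B = ψ (B + c • 1) - ψ (c • 1) := by
      rw [map_add]; abel
    have h1 := htr A (B + c • 1) hA hBc
    have h2 := htr A (c • 1) hA (hscal c hc)
    calc Matrix.trace (φ A * ψ B)
        = Matrix.trace (φ A * ψ (B + c • 1)) - Matrix.trace (φ A * ψ (c • 1)) := by
          rw [hψB, mul_sub, Matrix.trace_sub]
      _ = Matrix.trace (A * (B + c • 1)) - Matrix.trace (A * (c • 1)) := by rw [h1, h2]
      _ = Matrix.trace (A * B) := by rw [mul_add, Matrix.trace_add]; ring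
  have htr2 : ∀ A B : Matrix (Fin n) (Fin n) ℂ, A.IsHermitian → B.IsHermitian →
      Matrix.trace (φ A * ψ B) = Matrix.trace (A * B) := by
    intro A B hA hB
    obtain ⟨c, hc, hAc⟩ := aux_exists_posDef_add hA
    have hφA : φ A = φ (A + c • 1) - φ (c • 1) := by
      rw [map_add]; abel
    have h1 := htr1 (A + c • 1) B hAc hB
    have h2 := htr1 (c • 1) B (hscal c hc) hB
    calc Matrix.trace (φ A * ψ B)
        = Matrix.trace (φ (A + c • 1) * ψ B) - Matrix.trace (φ (c • 1) * ψ B) := by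
          rw [hφA, sub_mul, Matrix.trace_sub]
      _ = Matrix.trace ((A + c • 1) * B) - Matrix.trace ((c • 1) * B) := by rw [h1, h2]
      _ = Matrix.trace (A * B) := by rw [add_mul, Matrix.trace_add]; ring
  -- it suffices to show φ 1 is positive definite
  have hφ1 : (φ 1).PosSemidef := hφ 1 Matrix.PosDef.one
  suffices hpd : (φ 1).PosDef from ⟨hpd.isUnit, hpd⟩
  refine Matrix.PosDef.of_dotProduct_mulVec_pos hφ1.1 fun x hx => ?_
  by_contra hq
  have hq0 : star x ⬝ᵥ ((φ 1) *ᵥ x) = 0 := by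
    by_contra h0
    exact hq ((hφ1.dotProduct_mulVec_nonneg x).lt_of_ne (Ne.symm h0))
  -- pull back x xᴴ through ψ
  have hherm : Matrix.vecMulVec x (star x) ∈
      {A : Matrix (Fin n) (Fin n) ℂ | A.IsHermitian} :=
    (aux_vecMulVec_posSemidef x).1
  obtain ⟨C, hCherm, hCψ⟩ := hψbij.surjOn hherm
  have hCherm' : C.IsHermitian := hCherm
  -- the trace of C is zero
  have htrC : Matrix.trace C = 0 := by
    have h := htr2 1 C (Matrix.isHermitian_one) hCherm'
    rw [hCψ, aux_trace_mul_vecMulVec, hq0, one_mul] at h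
    exact h.symm
  -- C is positive semidefinite
  have hCpsd : C.PosSemidef := by
    refine Matrix.PosSemidef.of_dotProduct_mulVec_nonneg hCherm' fun y => ?_
    have hApd : (Matrix.vecMulVec y (star y) + 1).PosDef :=
      Matrix.PosDef.posSemidef_add (aux_vecMulVec_posSemidef y) Matrix.PosDef.one
    have h := htr2 (Matrix.vecMulVec y (star y) + 1) C hApd.1 hCherm'
    have hlhs : (0 : ℂ) ≤ Matrix.trace (φ (Matrix.vecMulVec y (star y) + 1) * ψ C) := by
      rw [hCψ, aux_trace_mul_vecMulVec]
      exact (hφ _ hApd).dotProduct_mulVec_nonneg x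
    rw [h, add_mul, Matrix.trace_add, one_mul, htrC, add_zero,
      Matrix.trace_mul_comm, aux_trace_mul_vecMulVec] at hlhs
    exact hlhs
  -- hence C = 0, contradiction with x ≠ 0
  have hC0 : C = 0 := aux_posSemidef_trace_zero hCpsd htrC
  rw [hC0, map_zero] at hCψ
  obtain ⟨i, hi⟩ := Function.ne_iff.mp hx
  have hii : Matrix.vecMulVec x (star x) i i = 0 := by rw [← hCψ]; simp
  rw [Matrix.vecMulVec_apply] at hii
  apply hi
  rcases mul_eq_zero.mp hii with h | h
  · exact h
  · simpa using h
end

section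
/- Two maps φ₁, φ₂: D_n → D_n satisfy tr(φ₁(A)φ₂(B)) = tr(AB) for all A, B ∈ D_n if and only if there exists an invertible matrix N ∈ M_n such that φ₁(A) = diag(N · diag⁻¹(A)) and φ₂(A) = diag(N^{-t} · diag⁻¹(A)) for all A ∈ D_n, where diag: ℂⁿ → D_n sends a vector to the diagonal matrix with those entries and diag⁻¹ is its inverse. -/
open Matrix

theorem stmt19 (n : ℕ)
    (φ₁ φ₂ : Matrix (Fin n) (Fin n) ℂ → Matrix (Fin n) (Fin n) ℂ)
    (hφ₁ : ∀ v : Fin n → ℂ, ∃ w : Fin n → ℂ, φ₁ (Matrix.diagonal v) = Matrix.diagonal w)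
    (hφ₂ : ∀ v : Fin n → ℂ, ∃ w : Fin n → ℂ, φ₂ (Matrix.diagonal v) = Matrix.diagonal w) :
    (∀ u v : Fin n → ℂ,
      Matrix.trace (φ₁ (Matrix.diagonal u) * φ₂ (Matrix.diagonal v)) =
        Matrix.trace (Matrix.diagonal u * Matrix.diagonal v))
    ↔ ∃ N : Matrix (Fin n) (Fin n) ℂ, IsUnit N ∧
        ∀ v : Fin n → ℂ,
          φ₁ (Matrix.diagonal v) = Matrix.diagonal (N *ᵥ v) ∧
          φ₂ (Matrix.diagonal v) = Matrix.diagonal ((Nᵀ)⁻¹ *ᵥ v) := by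
  constructor
  · intro htr
    set f : (Fin n → ℂ) → (Fin n → ℂ) := fun v i => φ₁ (Matrix.diagonal v) i i with hf
    set g : (Fin n → ℂ) → (Fin n → ℂ) := fun v i => φ₂ (Matrix.diagonal v) i i with hg
    have hf1 : ∀ v, φ₁ (Matrix.diagonal v) = Matrix.diagonal (f v) := by
      intro v
      obtain ⟨w, hw⟩ := hφ₁ v
      have : f v = w := by funext i; simp [hf, hw]
      rw [this, hw]
    have hg1 : ∀ v, φ₂ (Matrix.diagonal v) = Matrix.diagonal (g v) := by
      intro v
      obtain ⟨w, hw⟩ := hφ₂ v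
      have : g v = w := by funext i; simp [hg, hw]
      rw [this, hw]
    have key : ∀ u v, f u ⬝ᵥ g v = u ⬝ᵥ v := by
      intro u v
      have := htr u v
      rw [hf1, hg1] at this
      simpa [Matrix.diagonal_mul_diagonal, Matrix.trace_diagonal, dotProduct] using this
    set M : Matrix (Fin n) (Fin n) ℂ := Matrix.of (fun j i => g (Pi.single j 1) i) with hM
    have hMf : ∀ u, M *ᵥ f u = u := by
      intro u
      funext j
      have := key u (Pi.single j 1)
      simpa [Matrix.mulVec, dotProduct, hM, Pi.single_apply, mul_ite, mul_one, mul_zero,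
        Finset.sum_ite_eq', mul_comm] using this
    have hMunit : IsUnit M :=
      Matrix.mulVec_surjective_iff_isUnit.1 (fun u => ⟨f u, hMf u⟩)
    refine ⟨M⁻¹, Matrix.isUnit_nonsing_inv_iff.2 hMunit, fun v => ?_⟩
    have hfN : ∀ u, f u = M⁻¹ *ᵥ u := by
      intro u
      have h1 : M⁻¹ *ᵥ (M *ᵥ f u) = M⁻¹ *ᵥ u := by rw [hMf]
      rwa [Matrix.mulVec_mulVec, Matrix.nonsing_inv_mul M
        ((Matrix.isUnit_iff_isUnit_det M).1 hMunit), Matrix.one_mulVec] at h1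
    constructor
    · rw [hf1, hfN]
    · have hTg : (M⁻¹)ᵀ *ᵥ g v = v := by
        funext j
        have := key (Pi.single j 1) v
        rw [hfN] at this
        simpa [Matrix.mulVec, dotProduct, Matrix.transpose_apply, Pi.single_apply, mul_ite,
          ite_mul, mul_one, mul_zero, one_mul, zero_mul, Finset.sum_ite_eq', Finset.sum_ite_eq]
          using this
      have hTunit : IsUnit (M⁻¹)ᵀ :=
        (Matrix.isUnit_transpose _).2 (Matrix.isUnit_nonsing_inv_iff.2 hMunit)
      have hgv : g v = ((M⁻¹)ᵀ)⁻¹ *ᵥ v := by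
        have h1 : ((M⁻¹)ᵀ)⁻¹ *ᵥ ((M⁻¹)ᵀ *ᵥ g v) = ((M⁻¹)ᵀ)⁻¹ *ᵥ v := by rw [hTg]
        rwa [Matrix.mulVec_mulVec, Matrix.nonsing_inv_mul _
          ((Matrix.isUnit_iff_isUnit_det _).1 hTunit), Matrix.one_mulVec] at h1
      rw [hg1, hgv]
  · rintro ⟨N, hN, h⟩ u v
    rw [(h u).1, (h v).2, Matrix.diagonal_mul_diagonal, Matrix.diagonal_mul_diagonal,
      Matrix.trace_diagonal, Matrix.trace_diagonal]
    have hNT : IsUnit Nᵀ := (Matrix.isUnit_transpose N).2 hN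
    have h2 : Nᵀ *ᵥ ((Nᵀ)⁻¹ *ᵥ v) = v := by
      rw [Matrix.mulVec_mulVec, Matrix.mul_nonsing_inv _
        ((Matrix.isUnit_iff_isUnit_det _).1 hNT), Matrix.one_mulVec]
    calc (∑ i, (N *ᵥ u) i * ((Nᵀ)⁻¹ *ᵥ v) i)
        = (N *ᵥ u) ⬝ᵥ ((Nᵀ)⁻¹ *ᵥ v) := rfl
      _ = (u ᵥ* Nᵀ) ⬝ᵥ ((Nᵀ)⁻¹ *ᵥ v) := by rw [Matrix.vecMul_transpose]
      _ = u ⬝ᵥ (Nᵀ *ᵥ ((Nᵀ)⁻¹ *ᵥ v)) := (Matrix.dotProduct_mulVec u Nᵀ _).symm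
      _ = u ⬝ᵥ v := by rw [h2]
      _ = ∑ i, u i * v i := rfl
end
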